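/- arXiv:1404.0357 — 6 statements merged into one kernel-verified Lean document; each statement's English description precedes it below -/
import Mathlib

section
/- Let E be a module over L⁰ endowed with a topology τ such that for every τ-neighborhood V of 0 ∈ E and every ε ∈ L⁰₊₊ there exists a τ-neighborhood W of 0 with ε•W ⊆ V (this holds in any topological L⁰-module). Then the following are equivalent: (a) there exists a family 𝒫 of L⁰-seminorms on E such that the sets U_{Q,ε} := {X ∈ E : ‖X‖ ≤ ε a.e. for all ‖·‖ ∈ Q}, for Q ⊆ 𝒫 finite and ε ∈ L⁰₊₊, form a neighborhood base of 0 for τ; (b) there exists a neighborhood base 𝒰 of 0 for τ such that every U ∈ 𝒰 is L⁰-convex, L⁰-absorbent, L⁰-balanced, and closed under countable concatenations. -/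
open MeasureTheory Filter Pointwise

variable {Ω : Type*} [MeasurableSpace Ω] (P : MeasureTheory.Measure Ω ) [IsProbabilityMeasure P]

noncomputable instance : CommRing (Ω →ₘ[P] ℝ) :=
  { (inferInstance : AddCommGroup (Ω →ₘ[P] ℝ)),
    (inferInstance : CommMonoid (Ω →ₘ[P] ℝ)) with
    left_distrib := fun f g h => AEEqFun.ext (by
      filter_upwards [AEEqFun.coeFn_mul f (g + h), AEEqFun.coeFn_add g h,
        AEEqFun.coeFn_add (f * g) (f * h), AEEqFun.coeFn_mul f g, AEEqFun.coeFn_mul f h]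
        with ω h1 h2 h3 h4 h5
      simp only [Pi.mul_apply, Pi.add_apply] at *
      rw [h1, h2, h3, h4, h5, mul_add])
    right_distrib := fun f g h => AEEqFun.ext (by
      filter_upwards [AEEqFun.coeFn_mul (f + g) h, AEEqFun.coeFn_add f g,
        AEEqFun.coeFn_add (f * h) (g * h), AEEqFun.coeFn_mul f h, AEEqFun.coeFn_mul g h]
        with ω h1 h2 h3 h4 h5
      simp only [Pi.mul_apply, Pi.add_apply] at *
      rw [h1, h2, h3, h4, h5, add_mul])
    zero_mul := fun f => AEEqFun.ext (by
      filter_upwards [AEEqFun.coeFn_mul 0 f, AEEqFun.coeFn_zero (β := ℝ) (μ := P)]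
        with ω h1 h2
      simp only [Pi.mul_apply, Pi.zero_apply] at *
      rw [h1, h2, zero_mul])
    mul_zero := fun f => AEEqFun.ext (by
      filter_upwards [AEEqFun.coeFn_mul f 0, AEEqFun.coeFn_zero (β := ℝ) (μ := P)]
        with ω h1 h2
      simp only [Pi.mul_apply, Pi.zero_apply] at *
      rw [h1, h2, mul_zero]) }

/-- `L⁰₊₊`: the set of a.e. strictly positive elements. -/
def L0pp (Y : Ω →ₘ[P] ℝ) : Prop := ∀ᵐ ω ∂P, 0 < Y ω

/-- The equivalence class of the indicator function of a measurable set. -/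
noncomputable def ind (A : Set Ω) (hA : MeasurableSet A) : Ω →ₘ[P] ℝ :=
  AEEqFun.mk (A.indicator fun _ => (1 : ℝ)) (aestronglyMeasurable_const.indicator hA)

section ModuleDefs

variable {E : Type*} [AddCommGroup E] [Module (Ω →ₘ[P] ℝ) E]

/-- `L⁰`-convexity of a subset of an `L⁰`-module. -/
def IsL0Convex (U : Set E) : Prop :=
  ∀ X₁ ∈ U, ∀ X₂ ∈ U, ∀ Y : Ω →ₘ[P] ℝ, 0 ≤ Y → Y ≤ 1 → Y • X₁ + (1 - Y) • X₂ ∈ U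

/-- `L⁰`-absorbency of a subset of an `L⁰`-module. -/
def IsL0Absorbent (U : Set E) : Prop :=
  ∀ X : E, ∃ Y : Ω →ₘ[P] ℝ, L0pp P Y ∧ X ∈ Y • U

/-- `L⁰`-balancedness of a subset of an `L⁰`-module. -/
def IsL0Balanced (U : Set E) : Prop :=
  ∀ X ∈ U, ∀ Y : Ω →ₘ[P] ℝ, |Y| ≤ 1 → Y • X ∈ U

/-- Closedness under countable concatenations. -/
def IsConcatClosed (C : Set E) : Prop :=
  ∀ (A : ℕ → Set Ω) (hA : ∀ n, MeasurableSet (A n)),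
    Pairwise (Function.onFun Disjoint A) → (⋃ n, A n) = Set.univ →
    ∀ X : E, (∀ n, ∃ Xn ∈ C, ind P (A n) (hA n) • X = ind P (A n) (hA n) • Xn) → X ∈ C

/-- `L⁰`-seminorm. -/
def IsL0Seminorm (p : E → (Ω →ₘ[P] ℝ)) : Prop :=
  (∀ X : E, 0 ≤ p X) ∧ (∀ (Y : Ω →ₘ[P] ℝ) (X : E), p (Y • X) = |Y| * p X) ∧
    (∀ X₁ X₂ : E, p (X₁ + X₂) ≤ p X₁ + p X₂)

/-- The set whose essential infimum is the gauge `p_K(X)`. -/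
def gaugeSet (K : Set E) (X : E) : Set (Ω →ₘ[P] ℝ) :=
  {Y : Ω →ₘ[P] ℝ | 0 ≤ Y ∧ X ∈ Y • K}

end ModuleDefs

section Toolkit
set_option linter.unusedSectionVars false

variable {Ω : Type*} [MeasurableSpace Ω] {P : MeasureTheory.Measure Ω} [IsProbabilityMeasure P]

lemma l0_le_iff {f g : Ω →ₘ[P] ℝ} : f ≤ g ↔ ∀ᵐ ω ∂P, f ω ≤ g ω := AEEqFun.coeFn_le.symm

lemma l0_nonneg_iff {f : Ω →ₘ[P] ℝ} : 0 ≤ f ↔ ∀ᵐ ω ∂P, 0 ≤ f ω := by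
  rw [l0_le_iff]
  constructor <;> intro h <;>
    filter_upwards [h, AEEqFun.coeFn_zero (β := ℝ) (μ := P)] with ω h1 h2
  · rwa [h2] at h1
  · rwa [h2]

lemma l0_le_one_iff {f : Ω →ₘ[P] ℝ} : f ≤ 1 ↔ ∀ᵐ ω ∂P, f ω ≤ 1 := by
  rw [l0_le_iff]
  constructor <;> intro h <;>
    filter_upwards [h, AEEqFun.coeFn_one (β := ℝ) (μ := P)] with ω h1 h2
  · rwa [h2] at h1
  · rwa [h2]

lemma l0_ext_iff {f g : Ω →ₘ[P] ℝ} : f = g ↔ ∀ᵐ ω ∂P, f ω = g ω :=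
  ⟨fun h => h ▸ ae_eq_refl _, AEEqFun.ext⟩

/-- a measurable representative -/
noncomputable def mrep (f : Ω →ₘ[P] ℝ) : Ω → ℝ :=
  (f.aestronglyMeasurable.aemeasurable).mk f

lemma mrep_measurable (f : Ω →ₘ[P] ℝ) : Measurable (mrep f) :=
  (f.aestronglyMeasurable.aemeasurable).measurable_mk

lemma mrep_ae_eq (f : Ω →ₘ[P] ℝ) : ⇑f =ᵐ[P] mrep f :=
  (f.aestronglyMeasurable.aemeasurable).ae_eq_mk

/-- pointwise inverse -/
noncomputable def ainv (f : Ω →ₘ[P] ℝ) : Ω →ₘ[P] ℝ :=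
  AEEqFun.mk (fun ω => (mrep f ω)⁻¹) ((mrep_measurable f).inv.aestronglyMeasurable)

lemma coeFn_ainv (f : Ω →ₘ[P] ℝ) : ⇑(ainv f) =ᵐ[P] fun ω => (f ω)⁻¹ := by
  filter_upwards [AEEqFun.coeFn_mk (μ := P) (fun ω => (mrep f ω)⁻¹)
    ((mrep_measurable f).inv.aestronglyMeasurable), mrep_ae_eq f] with ω h1 h2
  simp only [ainv]
  rw [h1, h2]

lemma mul_ainv {f : Ω →ₘ[P] ℝ} (hf : ∀ᵐ ω ∂P, f ω ≠ 0) : f * ainv f = 1 := by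
  rw [l0_ext_iff]
  filter_upwards [AEEqFun.coeFn_mul f (ainv f), coeFn_ainv f, hf,
    AEEqFun.coeFn_one (β := ℝ) (μ := P)] with ω h1 h2 h3 h4
  rw [h1, h4]
  simp only [Pi.mul_apply, h2]
  field_simp
  rfl

lemma coeFn_ind {A : Set Ω} (hA : MeasurableSet A) :
    ⇑(ind P A hA) =ᵐ[P] A.indicator (fun _ => (1:ℝ)) :=
  AEEqFun.coeFn_mk _ _

lemma l0pp_ainv {f : Ω →ₘ[P] ℝ} (hf : L0pp P f) : L0pp P (ainv f) := by
  filter_upwards [coeFn_ainv f, hf] with ω h1 h2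
  rw [h1]; exact inv_pos.2 h2

end Toolkit
section GaugeAux
set_option linter.unusedSectionVars false

open MeasureTheory Filter

variable {Ω : Type*} [MeasurableSpace Ω] {P : MeasureTheory.Measure Ω} [IsProbabilityMeasure P]

/-- a.e. sign function -/
noncomputable def asign (f : Ω →ₘ[P] ℝ) : Ω →ₘ[P] ℝ :=
  AEEqFun.mk (fun ω => if mrep f ω < 0 then (-1:ℝ) else 1)
    ((Measurable.ite (measurableSet_lt (mrep_measurable f) measurable_const)
      measurable_const measurable_const).aestronglyMeasurable)

lemma coeFn_asign (f : Ω →ₘ[P] ℝ) :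
    ⇑(asign f) =ᵐ[P] fun ω => if mrep f ω < 0 then (-1:ℝ) else 1 :=
  AEEqFun.coeFn_mk _ _

lemma abs_asign_le_one (f : Ω →ₘ[P] ℝ) : |asign f| ≤ 1 := by
  rw [l0_le_one_iff]
  filter_upwards [AEEqFun.coeFn_abs (asign f), coeFn_asign f] with ω h1 h2
  rw [h1, h2]
  split_ifs <;> simp

lemma asign_mul_abs (f : Ω →ₘ[P] ℝ) : asign f * |f| = f := by
  rw [l0_ext_iff]
  filter_upwards [AEEqFun.coeFn_mul (asign f) |f|, AEEqFun.coeFn_abs f, coeFn_asign f,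
    mrep_ae_eq f] with ω h1 h2 h3 h4
  rw [h1]
  simp only [Pi.mul_apply]
  rw [h2, h3, h4]
  rcases lt_or_ge (mrep f ω) 0 with h | h
  · simp [h, abs_of_neg h]
  · simp [not_lt.2 h, abs_of_nonneg h]

variable {E : Type*} [AddCommGroup E] [Module (Ω →ₘ[P] ℝ) E]

lemma smul_add_smul_mem {U : Set E} (hconv : IsL0Convex P U) {a b : Ω →ₘ[P] ℝ}
    (ha : 0 ≤ a) (hb : 0 ≤ b) {Z₁ Z₂ : E} (h₁ : Z₁ ∈ U) (h₂ : Z₂ ∈ U) :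
    a • Z₁ + b • Z₂ ∈ (a + b) • U := by
  classical
  have hmeas : Measurable fun ω =>
      if mrep a ω + mrep b ω = 0 then (1/2:ℝ) else mrep a ω / (mrep a ω + mrep b ω) := by
    refine Measurable.ite ?_ measurable_const
      ((mrep_measurable a).div ((mrep_measurable a).add (mrep_measurable b)))
    exact ((mrep_measurable a).add (mrep_measurable b)) (measurableSet_singleton (0:ℝ))
  set lam : Ω →ₘ[P] ℝ := AEEqFun.mk _ hmeas.aestronglyMeasurable with hlamdef
  have hlam : ⇑lam =ᵐ[P] fun ω =>
      if mrep a ω + mrep b ω = 0 then (1/2:ℝ) else mrep a ω / (mrep a ω + mrep b ω) :=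
    AEEqFun.coeFn_mk _ _
  have key : ∀ᵐ ω ∂P, (0 ≤ lam ω ∧ lam ω ≤ 1) ∧ lam ω * (a ω + b ω) = a ω ∧
      (1 - lam ω) * (a ω + b ω) = b ω := by
    filter_upwards [hlam, mrep_ae_eq a, mrep_ae_eq b, l0_nonneg_iff.1 ha, l0_nonneg_iff.1 hb]
      with ω hl hA hB hA0 hB0
    rw [hl, hA, hB]
    rw [hA] at hA0; rw [hB] at hB0
    by_cases h : mrep a ω + mrep b ω = 0
    · have h1 : mrep a ω = 0 := by linarith
      have h2 : mrep b ω = 0 := by linarith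
      norm_num [h, h1, h2]
    · have hpos : 0 < mrep a ω + mrep b ω := lt_of_le_of_ne (by linarith) (Ne.symm h)
      simp only [h, if_false]
      refine ⟨⟨div_nonneg hA0 hpos.le, (div_le_one hpos).2 (by linarith)⟩,
        div_mul_cancel₀ _ h, ?_⟩
      field_simp
      ring
  have h0lam : 0 ≤ lam := l0_nonneg_iff.2 (key.mono fun ω h => h.1.1)
  have h1lam : lam ≤ 1 := l0_le_one_iff.2 (key.mono fun ω h => h.1.2)
  refine Set.mem_smul_set.2 ⟨lam • Z₁ + (1 - lam) • Z₂, hconv _ h₁ _ h₂ lam h0lam h1lam, ?_⟩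
  have e1 : (a + b) * lam = a := by
    rw [l0_ext_iff]
    filter_upwards [key, AEEqFun.coeFn_mul (a+b) lam, AEEqFun.coeFn_add a b] with ω hk hm hadd
    rw [hm]; simp only [Pi.mul_apply]; rw [hadd]; simp only [Pi.add_apply]
    rw [mul_comm]; exact hk.2.1
  have e2 : (a + b) * (1 - lam) = b := by
    rw [l0_ext_iff]
    filter_upwards [key, AEEqFun.coeFn_mul (a+b) (1-lam), AEEqFun.coeFn_add a b,
      AEEqFun.coeFn_sub (1:Ω →ₘ[P] ℝ) lam, AEEqFun.coeFn_one (β := ℝ) (μ := P)]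
      with ω hk hm hadd hsub hone
    rw [hm]; simp only [Pi.mul_apply]; rw [hadd, hsub]
    simp only [Pi.add_apply, Pi.sub_apply]
    rw [hone]; simp only [Pi.one_apply]
    rw [mul_comm]; exact hk.2.2
  rw [smul_add, smul_smul, smul_smul, e1, e2]

lemma gaugeSet_inf_mem {U : Set E} (hconv : IsL0Convex P U) {X : E} {Y₁ Y₂ : Ω →ₘ[P] ℝ}
    (h₁ : Y₁ ∈ gaugeSet P U X) (h₂ : Y₂ ∈ gaugeSet P U X) : Y₁ ⊓ Y₂ ∈ gaugeSet P U X := by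
  obtain ⟨hY₁, hX₁⟩ := h₁
  obtain ⟨hY₂, hX₂⟩ := h₂
  obtain ⟨Z₁, hZ₁, hXZ₁⟩ := Set.mem_smul_set.1 hX₁
  obtain ⟨Z₂, hZ₂, hXZ₂⟩ := Set.mem_smul_set.1 hX₂
  have hA : MeasurableSet {ω | mrep Y₁ ω ≤ mrep Y₂ ω} :=
    measurableSet_le (mrep_measurable Y₁) (mrep_measurable Y₂)
  set A := {ω | mrep Y₁ ω ≤ mrep Y₂ ω}
  set e := ind P A hA with hedef
  have he : ⇑e =ᵐ[P] A.indicator (fun _ => (1:ℝ)) := coeFn_ind hA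
  have he0 : 0 ≤ e := l0_nonneg_iff.2 (he.mono fun ω h => by
    rw [h]; exact Set.indicator_nonneg (fun _ _ => zero_le_one) ω)
  have he1 : e ≤ 1 := l0_le_one_iff.2 (he.mono fun ω h => by
    rw [h]; by_cases hω : ω ∈ A <;> simp [hω])
  have hmem := hconv Z₁ hZ₁ Z₂ hZ₂ e he0 he1
  refine ⟨le_inf hY₁ hY₂, Set.mem_smul_set.2 ⟨e • Z₁ + (1 - e) • Z₂, hmem, ?_⟩⟩
  have m1 : (Y₁ ⊓ Y₂) * e = e * Y₁ := by
    rw [l0_ext_iff]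
    filter_upwards [AEEqFun.coeFn_mul (Y₁ ⊓ Y₂) e, AEEqFun.coeFn_mul e Y₁,
      AEEqFun.coeFn_inf Y₁ Y₂, he, mrep_ae_eq Y₁, mrep_ae_eq Y₂] with ω hm1 hm2 hinf hei hr1 hr2
    rw [hm1, hm2]; simp only [Pi.mul_apply]
    rw [hinf, hei, hr1, hr2]
    by_cases hω : ω ∈ A
    · rw [Set.indicator_of_mem hω]
      have : mrep Y₁ ω ⊓ mrep Y₂ ω = mrep Y₁ ω := min_eq_left hω
      rw [this]; ring
    · rw [Set.indicator_of_notMem hω]; ring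
  have m2 : (Y₁ ⊓ Y₂) * (1 - e) = (1 - e) * Y₂ := by
    rw [l0_ext_iff]
    filter_upwards [AEEqFun.coeFn_mul (Y₁ ⊓ Y₂) (1-e), AEEqFun.coeFn_mul (1-e) Y₂,
      AEEqFun.coeFn_inf Y₁ Y₂, he, mrep_ae_eq Y₁, mrep_ae_eq Y₂,
      AEEqFun.coeFn_sub (1:Ω →ₘ[P] ℝ) e, AEEqFun.coeFn_one (β := ℝ) (μ := P)]
      with ω hm1 hm2 hinf hei hr1 hr2 hsub hone
    rw [hm1, hm2]; simp only [Pi.mul_apply]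
    rw [hinf, hsub]; simp only [Pi.sub_apply]
    rw [hone]; simp only [Pi.one_apply]
    rw [hei, hr1, hr2]
    by_cases hω : ω ∈ A
    · rw [Set.indicator_of_mem hω]; ring
    · rw [Set.indicator_of_notMem hω]
      have : mrep Y₁ ω ⊓ mrep Y₂ ω = mrep Y₂ ω := min_eq_right (le_of_not_ge hω)
      rw [this]; ring
  calc (Y₁ ⊓ Y₂) • (e • Z₁ + (1 - e) • Z₂)
      = ((Y₁ ⊓ Y₂) * e) • Z₁ + ((Y₁ ⊓ Y₂) * (1 - e)) • Z₂ := by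
        rw [smul_add, smul_smul, smul_smul]
    _ = (e * Y₁) • Z₁ + ((1 - e) * Y₂) • Z₂ := by rw [m1, m2]
    _ = e • (Y₁ • Z₁) + (1 - e) • (Y₂ • Z₂) := by rw [mul_smul, mul_smul]
    _ = X := by rw [hXZ₁, hXZ₂, ← add_smul]; simp

lemma gaugeSet_add_mem {U : Set E} (hconv : IsL0Convex P U) {X₁ X₂ : E} {Y₁ Y₂ : Ω →ₘ[P] ℝ}
    (h₁ : Y₁ ∈ gaugeSet P U X₁) (h₂ : Y₂ ∈ gaugeSet P U X₂) :
    Y₁ + Y₂ ∈ gaugeSet P U (X₁ + X₂) := by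
  obtain ⟨hY₁, hX₁⟩ := h₁
  obtain ⟨hY₂, hX₂⟩ := h₂
  obtain ⟨Z₁, hZ₁, hXZ₁⟩ := Set.mem_smul_set.1 hX₁
  obtain ⟨Z₂, hZ₂, hXZ₂⟩ := Set.mem_smul_set.1 hX₂
  have hsum : (0:Ω →ₘ[P] ℝ) ≤ Y₁ + Y₂ := by
    rw [l0_nonneg_iff]
    filter_upwards [AEEqFun.coeFn_add Y₁ Y₂, l0_nonneg_iff.1 hY₁, l0_nonneg_iff.1 hY₂]
      with ω h1 h2 h3
    rw [h1]; exact add_nonneg h2 h3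
  refine ⟨hsum, ?_⟩
  rw [← hXZ₁, ← hXZ₂]
  exact smul_add_smul_mem hconv hY₁ hY₂ hZ₁ hZ₂

end GaugeAux
section ExistsGauge
set_option linter.unusedSectionVars false
set_option maxHeartbeats 1000000

open MeasureTheory Filter Real

variable {Ω : Type*} [MeasurableSpace Ω] {P : MeasureTheory.Measure Ω} [IsProbabilityMeasure P]
variable {E : Type*} [AddCommGroup E] [Module (Ω →ₘ[P] ℝ) E]

lemma arctan_integrable {f : Ω → ℝ} (hf : AEStronglyMeasurable f P) :
    Integrable (fun ω => Real.arctan (f ω)) P := by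
  refine Integrable.mono' (integrable_const (Real.pi/2))
    (Real.continuous_arctan.comp_aestronglyMeasurable hf) (ae_of_all _ fun ω => ?_)
  rw [Real.norm_eq_abs, abs_le]
  exact ⟨by linarith [Real.neg_pi_div_two_lt_arctan (f ω)],
    (Real.arctan_lt_pi_div_two (f ω)).le⟩

lemma exists_gauge {U : Set E} (hconv : IsL0Convex P U) {X : E}
    (hne : (gaugeSet P U X).Nonempty) :
    ∃ p : Ω →ₘ[P] ℝ, 0 ≤ p ∧ (∀ Y ∈ gaugeSet P U X, p ≤ Y) ∧
      ∃ Z : ℕ → (Ω →ₘ[P] ℝ), (∀ n, Z n ∈ gaugeSet P U X) ∧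
        ∀ᵐ ω ∂P, Filter.Tendsto (fun n => Z n ω) Filter.atTop (nhds (p ω)) := by
  classical
  set G := gaugeSet P U X with hGdef
  set I : (Ω →ₘ[P] ℝ) → ℝ := fun f => ∫ ω, Real.arctan (f ω) ∂P with hIdef
  have hne' : (I '' G).Nonempty := hne.image I
  have hIbd : BddBelow (I '' G) := by
    refine ⟨-(Real.pi/2), ?_⟩
    rintro x ⟨f, hf, rfl⟩
    have h1 : ∫ (_ : Ω), -(Real.pi/2) ∂P ≤ I f := by
      refine integral_mono (integrable_const _) (arctan_integrable f.aestronglyMeasurable)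
        fun ω => (Real.neg_pi_div_two_lt_arctan (f ω)).le
    simpa using h1
  set m := sInf (I '' G) with hmdef
  obtain ⟨u, hu_anti, hu_tend, hu_mem⟩ := exists_seq_tendsto_sInf hne' hIbd
  choose Y hYG hYI using fun n => hu_mem n
  -- cumulative minima
  set M : ℕ → Ω →ₘ[P] ℝ := fun n => Nat.rec (Y 0) (fun k Mk => Mk ⊓ Y (k+1)) n with hMdef
  have hMG : ∀ n, M n ∈ G := by
    intro n; induction n with
    | zero => exact hYG 0
    | succ k ih => exact gaugeSet_inf_mem hconv ih (hYG (k+1))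
  -- pointwise decreasing measurable envelope
  set f : ℕ → Ω → ℝ := fun n => Nat.rec (fun ω => max (mrep (Y 0) ω) 0)
    (fun k fk ω => min (fk ω) (max (mrep (Y (k+1)) ω) 0)) n with hfdef
  have hf0eq : f 0 = fun ω => max (mrep (Y 0) ω) 0 := rfl
  have hfseq : ∀ n, f (n+1) = fun ω => min (f n ω) (max (mrep (Y (n+1)) ω) 0) := fun n => rfl
  have hfmeas : ∀ n, Measurable (f n) := by
    intro n; induction n with
    | zero => exact (mrep_measurable (Y 0)).max measurable_const
    | succ k ih => exact ih.min ((mrep_measurable (Y (k+1))).max measurable_const)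
  have hf_anti : ∀ n ω, f (n+1) ω ≤ f n ω := fun n ω => min_le_left _ _
  have hf0 : ∀ n ω, 0 ≤ f n ω := by
    intro n; induction n with
    | zero => exact fun ω => le_max_right _ _
    | succ k ih => exact fun ω => le_min (ih ω) (le_max_right _ _)
  have hfM : ∀ n, ⇑(M n) =ᵐ[P] f n := by
    intro n; induction n with
    | zero =>
      filter_upwards [mrep_ae_eq (Y 0), l0_nonneg_iff.1 (hYG 0).1] with ω h1 h2
      show (Y 0 : Ω →ₘ[P] ℝ) ω = max (mrep (Y 0) ω) 0
      rw [← h1, max_eq_left h2]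
    | succ k ih =>
      have : ⇑(M k ⊓ Y (k+1)) =ᵐ[P] fun ω => (M k) ω ⊓ (Y (k+1)) ω :=
        AEEqFun.coeFn_inf _ _
      filter_upwards [this, ih, mrep_ae_eq (Y (k+1)), l0_nonneg_iff.1 (hYG (k+1)).1]
        with ω h1 h2 h3 h4
      have h4' : 0 ≤ mrep (Y (k+1)) ω := by rwa [h3] at h4
      show (M k ⊓ Y (k+1) : Ω →ₘ[P] ℝ) ω = min (f k ω) (max (mrep (Y (k+1)) ω) 0)
      rw [max_eq_left h4', h1, h2, ← h3]
  -- the limit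
  set y : Ω → ℝ := fun ω => ⨅ n, f n ω with hydef
  have hbdd : ∀ ω, BddBelow (Set.range fun n => f n ω) := fun ω =>
    ⟨0, by rintro x ⟨n, rfl⟩; exact hf0 n ω⟩
  have hy_tend : ∀ ω, Tendsto (fun n => f n ω) atTop (nhds (y ω)) := fun ω =>
    tendsto_atTop_ciInf (antitone_nat_of_succ_le fun n => hf_anti n ω) (hbdd ω)
  have hy_meas : Measurable y :=
    measurable_of_tendsto_metrizable hfmeas (tendsto_pi_nhds.2 hy_tend)
  have hy0 : ∀ ω, 0 ≤ y ω := fun ω => le_ciInf fun n => hf0 n ω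
  have hy_le : ∀ n ω, y ω ≤ f n ω := fun n ω => ciInf_le (hbdd ω) n
  set p : Ω →ₘ[P] ℝ := AEEqFun.mk y hy_meas.aestronglyMeasurable with hpdef
  have hp : ⇑p =ᵐ[P] y := AEEqFun.coeFn_mk _ _
  have hplim : ∀ᵐ ω ∂P, Tendsto (fun n => (M n) ω) atTop (nhds (p ω)) := by
    have hall : ∀ᵐ ω ∂P, ∀ n, (M n) ω = f n ω := ae_all_iff.2 hfM
    filter_upwards [hp, hall] with ω h1 h2
    rw [h1]
    exact (hy_tend ω).congr fun n => (h2 n).symm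
  -- integral convergence to m
  have hIf : ∀ n, ∫ ω, Real.arctan (f n ω) ∂P = I (M n) := by
    intro n
    refine integral_congr_ae ?_
    filter_upwards [hfM n] with ω h
    rw [← h]
  have hmle : ∀ n, m ≤ ∫ ω, Real.arctan (f n ω) ∂P := fun n => by
    rw [hIf n]; exact csInf_le hIbd ⟨M n, hMG n, rfl⟩
  have hlequ : ∀ n, ∫ ω, Real.arctan (f n ω) ∂P ≤ u n := by
    intro n
    have hle : ∀ ω, f n ω ≤ max (mrep (Y n) ω) 0 := by
      cases n with
      | zero => exact fun ω => le_refl _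
      | succ k => exact fun ω => min_le_right _ _
    have h1 : ∫ ω, Real.arctan (f n ω) ∂P ≤ ∫ ω, Real.arctan (max (mrep (Y n) ω) 0) ∂P :=
      integral_mono (arctan_integrable (hfmeas n).aestronglyMeasurable)
        (arctan_integrable ((mrep_measurable (Y n)).max measurable_const).aestronglyMeasurable)
        fun ω => Real.arctan_strictMono.monotone (hle ω)
    have h2 : ∫ ω, Real.arctan (max (mrep (Y n) ω) 0) ∂P = I (Y n) := by
      refine integral_congr_ae ?_
      filter_upwards [mrep_ae_eq (Y n), l0_nonneg_iff.1 (hYG n).1] with ω hr h0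
      have h0' : 0 ≤ mrep (Y n) ω := by rwa [hr] at h0
      rw [max_eq_left h0', ← hr]
    rw [h2, hYI n] at h1
    exact h1
  have htend_f : Tendsto (fun n => ∫ ω, Real.arctan (f n ω) ∂P) atTop (nhds m) :=
    tendsto_of_tendsto_of_tendsto_of_le_of_le tendsto_const_nhds hu_tend hmle hlequ
  have hDCT : Tendsto (fun n => ∫ ω, Real.arctan (f n ω) ∂P) atTop
      (nhds (∫ ω, Real.arctan (y ω) ∂P)) := by
    refine tendsto_integral_of_dominated_convergence (fun _ => Real.pi/2)
      (fun n => (Real.continuous_arctan.measurable.comp (hfmeas n)).aestronglyMeasurable)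
      (integrable_const _) (fun n => ae_of_all _ fun ω => ?_)
      (ae_of_all _ fun ω => (Real.continuous_arctan.tendsto _).comp (hy_tend ω))
    rw [Real.norm_eq_abs, abs_le]
    exact ⟨by linarith [Real.neg_pi_div_two_lt_arctan (f n ω)],
      (Real.arctan_lt_pi_div_two _).le⟩
  have hIy : ∫ ω, Real.arctan (y ω) ∂P = m := tendsto_nhds_unique hDCT htend_f
  refine ⟨p, l0_nonneg_iff.2 (hp.mono fun ω h => by rw [h]; exact hy0 ω), ?_, M, hMG, hplim⟩
  -- lower bound property
  intro Y' hY'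
  set h0 : Ω → ℝ := fun ω => max (mrep Y' ω) 0 with h0def
  have h0meas : Measurable h0 := (mrep_measurable Y').max measurable_const
  have hq : ∀ n, m ≤ ∫ ω, Real.arctan (min (f n ω) (h0 ω)) ∂P := by
    intro n
    have hmemG : M n ⊓ Y' ∈ G := gaugeSet_inf_mem hconv (hMG n) hY'
    have heq : ∫ ω, Real.arctan (min (f n ω) (h0 ω)) ∂P = I (M n ⊓ Y') := by
      refine integral_congr_ae ?_
      have hc : ⇑(M n ⊓ Y') =ᵐ[P] fun ω => (M n) ω ⊓ Y' ω := AEEqFun.coeFn_inf _ _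
      filter_upwards [hc, hfM n, mrep_ae_eq Y', l0_nonneg_iff.1 hY'.1] with ω h1 h2 h3 h4
      have h4' : 0 ≤ mrep Y' ω := by rwa [h3] at h4
      show Real.arctan (min (f n ω) (max (mrep Y' ω) 0)) =
        Real.arctan ((M n ⊓ Y') ω)
      rw [max_eq_left h4', h1, h2, ← h3]
    rw [heq]
    exact csInf_le hIbd ⟨M n ⊓ Y', hmemG, rfl⟩
  have hqDCT : Tendsto (fun n => ∫ ω, Real.arctan (min (f n ω) (h0 ω)) ∂P) atTop
      (nhds (∫ ω, Real.arctan (min (y ω) (h0 ω)) ∂P)) := by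
    refine tendsto_integral_of_dominated_convergence (fun _ => Real.pi/2)
      (fun n => (Real.continuous_arctan.measurable.comp
        ((hfmeas n).min h0meas)).aestronglyMeasurable)
      (integrable_const _) (fun n => ae_of_all _ fun ω => ?_)
      (ae_of_all _ fun ω => (Real.continuous_arctan.tendsto _).comp
        (((hy_tend ω).min tendsto_const_nhds)))
    rw [Real.norm_eq_abs, abs_le]
    exact ⟨by linarith [Real.neg_pi_div_two_lt_arctan (min (f n ω) (h0 ω))],
      (Real.arctan_lt_pi_div_two _).le⟩
  have hmle2 : m ≤ ∫ ω, Real.arctan (min (y ω) (h0 ω)) ∂P :=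
    ge_of_tendsto hqDCT (Eventually.of_forall hq)
  have hinty : Integrable (fun ω => Real.arctan (y ω)) P :=
    arctan_integrable hy_meas.aestronglyMeasurable
  have hintmin : Integrable (fun ω => Real.arctan (min (y ω) (h0 ω))) P :=
    arctan_integrable (hy_meas.min h0meas).aestronglyMeasurable
  have hdiff_nonneg : ∀ ω, 0 ≤ Real.arctan (y ω) - Real.arctan (min (y ω) (h0 ω)) :=
    fun ω => sub_nonneg.2 (Real.arctan_strictMono.monotone (min_le_left _ _))
  have hzero : ∫ ω, (Real.arctan (y ω) - Real.arctan (min (y ω) (h0 ω))) ∂P = 0 := by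
    rw [integral_sub hinty hintmin, hIy]
    have : ∫ ω, Real.arctan (min (y ω) (h0 ω)) ∂P ≤ ∫ ω, Real.arctan (y ω) ∂P :=
      integral_mono hintmin hinty fun ω =>
        Real.arctan_strictMono.monotone (min_le_left _ _)
    rw [hIy] at this
    linarith
  have hae := (integral_eq_zero_iff_of_nonneg hdiff_nonneg (hinty.sub hintmin)).1 hzero
  rw [l0_le_iff]
  filter_upwards [hae, hp, mrep_ae_eq Y', l0_nonneg_iff.1 hY'.1] with ω he hpω hrω h0ω
  have harct : Real.arctan (y ω) = Real.arctan (min (y ω) (h0 ω)) := by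
    have : Real.arctan (y ω) - Real.arctan (min (y ω) (h0 ω)) = 0 := he
    linarith
  have hymin : y ω = min (y ω) (h0 ω) := Real.arctan_injective harct
  have : y ω ≤ h0 ω := by rw [hymin]; exact min_le_right _ _
  have h0ω' : 0 ≤ mrep Y' ω := by rwa [hrω] at h0ω
  have hfin : h0 ω = Y' ω := by
    show max (mrep Y' ω) 0 = Y' ω
    rw [max_eq_left h0ω', ← hrω]
  rw [hpω, ← hfin]
  exact this
end ExistsGauge
section SeminormPkg
set_option linter.unusedSectionVars false
set_option maxHeartbeats 1000000

open MeasureTheory Filter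

variable {Ω : Type*} [MeasurableSpace Ω] {P : MeasureTheory.Measure Ω} [IsProbabilityMeasure P]
variable {E : Type*} [AddCommGroup E] [Module (Ω →ₘ[P] ℝ) E]

lemma ind_mul_self {A : Set Ω} (hA : MeasurableSet A) :
    ind P A hA * ind P A hA = ind P A hA := by
  rw [l0_ext_iff]
  filter_upwards [AEEqFun.coeFn_mul (ind P A hA) (ind P A hA), coeFn_ind hA] with ω h1 h2
  rw [h1]; simp only [Pi.mul_apply]; rw [h2]
  by_cases hω : ω ∈ A <;> simp [hω]

lemma gaugeSet_abs_smul_mem {U : Set E} (hbal : IsL0Balanced P U) {X : E}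
    {W : Ω →ₘ[P] ℝ} (hW : W ∈ gaugeSet P U X) (Y : Ω →ₘ[P] ℝ) :
    |Y| * W ∈ gaugeSet P U (Y • X) := by
  obtain ⟨hW0, hXW⟩ := hW
  obtain ⟨Z₁, hZ₁, hXZ₁⟩ := Set.mem_smul_set.1 hXW
  constructor
  · rw [l0_nonneg_iff]
    filter_upwards [AEEqFun.coeFn_mul |Y| W, AEEqFun.coeFn_abs Y, l0_nonneg_iff.1 hW0]
      with ω h1 h2 h3
    rw [h1]; simp only [Pi.mul_apply]; rw [h2]
    exact mul_nonneg (abs_nonneg _) h3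
  · refine Set.mem_smul_set.2 ⟨asign Y • Z₁, hbal Z₁ hZ₁ _ (abs_asign_le_one Y), ?_⟩
    rw [smul_smul]
    have h : |Y| * W * asign Y = asign Y * |Y| * W := by ring
    rw [h, asign_mul_abs, ← hXZ₁, smul_smul]

lemma exists_gauge_seminorm {U : Set E} (hconv : IsL0Convex P U)
    (habs : IsL0Absorbent P U) (hbal : IsL0Balanced P U) :
    ∃ p : E → (Ω →ₘ[P] ℝ), IsL0Seminorm P p ∧
      (∀ (X : E) (Y : Ω →ₘ[P] ℝ), Y ∈ gaugeSet P U X → p X ≤ Y) ∧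
      (IsConcatClosed P U → ∀ X : E,
        p X ≤ AEEqFun.const Ω (1/2 : ℝ) → X ∈ U) := by
  classical
  have hne : ∀ X : E, (gaugeSet P U X).Nonempty := fun X => by
    obtain ⟨Y, hY, hXY⟩ := habs X
    exact ⟨Y, l0_nonneg_iff.2 (hY.mono fun ω h => h.le), hXY⟩
  choose p hp0 hplb hseq using fun X : E => exists_gauge hconv (hne X)
  choose Z hZG hZt using hseq
  -- subadditivity
  have hsub : ∀ X₁ X₂ : E, p (X₁ + X₂) ≤ p X₁ + p X₂ := by
    intro X₁ X₂
    have hn : ∀ n, p (X₁ + X₂) ≤ Z X₁ n + Z X₂ n := fun n =>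
      hplb _ _ (gaugeSet_add_mem hconv (hZG X₁ n) (hZG X₂ n))
    rw [l0_le_iff]
    filter_upwards [ae_all_iff.2 fun n => l0_le_iff.1 (hn n),
      ae_all_iff.2 fun n => AEEqFun.coeFn_add (Z X₁ n) (Z X₂ n), hZt X₁, hZt X₂,
      AEEqFun.coeFn_add (p X₁) (p X₂)] with ω h1 h2 h3 h4 h5
    rw [h5]; simp only [Pi.add_apply]
    refine ge_of_tendsto (h3.add h4) (Eventually.of_forall fun n => ?_)
    calc p (X₁ + X₂) ω ≤ (Z X₁ n + Z X₂ n : Ω →ₘ[P] ℝ) ω := h1 n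
      _ = Z X₁ n ω + Z X₂ n ω := by rw [h2 n]; simp
  -- homogeneity
  have hhom : ∀ (Y : Ω →ₘ[P] ℝ) (X : E), p (Y • X) = |Y| * p X := by
    intro Y X
    have hle : p (Y • X) ≤ |Y| * p X := by
      have hn : ∀ n, p (Y • X) ≤ |Y| * Z X n := fun n =>
        hplb _ _ (gaugeSet_abs_smul_mem hbal (hZG X n) Y)
      rw [l0_le_iff]
      filter_upwards [ae_all_iff.2 fun n => l0_le_iff.1 (hn n),
        ae_all_iff.2 fun n => AEEqFun.coeFn_mul |Y| (Z X n), hZt X,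
        AEEqFun.coeFn_mul |Y| (p X)] with ω h1 h2 h3 h4
      rw [h4]; simp only [Pi.mul_apply]
      refine ge_of_tendsto (Tendsto.const_mul ((|Y| : Ω →ₘ[P] ℝ) ω) h3)
        (Eventually.of_forall fun n => ?_)
      calc p (Y • X) ω ≤ (|Y| * Z X n : Ω →ₘ[P] ℝ) ω := h1 n
        _ = (|Y| : Ω →ₘ[P] ℝ) ω * Z X n ω := by rw [h2 n]; simp
    have hge : |Y| * p X ≤ p (Y • X) := by
      -- |Y| * p X is a lower bound of the gauge set of Y • X
      have hlb : ∀ W ∈ gaugeSet P U (Y • X), |Y| * p X ≤ W := by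
        intro W hWmem
        obtain ⟨hW0, hXW⟩ := hWmem
        obtain ⟨Zw, hZw, hXZw⟩ := Set.mem_smul_set.1 hXW
        obtain ⟨hV0, hXV⟩ := hZG X 0
        obtain ⟨Z₀, hZ₀, hXZ₀⟩ := Set.mem_smul_set.1 hXV
        set V0 := Z X 0
        have hA : MeasurableSet {ω | mrep Y ω = 0} :=
          (mrep_measurable Y) (measurableSet_singleton (0:ℝ))
        set A := {ω | mrep Y ω = 0}
        set e := ind P A hA with hedef
        set W' : Ω →ₘ[P] ℝ := |ainv Y| * W + e * V0 with hW'def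
        -- scalar identities
        have hiy : ainv Y * Y = 1 - e := by
          rw [l0_ext_iff]
          filter_upwards [AEEqFun.coeFn_mul (ainv Y) Y, coeFn_ainv Y, mrep_ae_eq Y,
            coeFn_ind hA, AEEqFun.coeFn_sub (1 : Ω →ₘ[P] ℝ) e,
            AEEqFun.coeFn_one (β := ℝ) (μ := P)] with ω h1 h2 h3 h4 h5
          intro h6
          rw [h1]; simp only [Pi.mul_apply]; rw [h2, h5]
          simp only [Pi.sub_apply]; rw [h6, h4, h3]
          by_cases hω : ω ∈ A
          · have : mrep Y ω = 0 := hω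
            simp [hω, this]
          · have hne0 : mrep Y ω ≠ 0 := hω
            simp [hω, inv_mul_cancel₀ hne0]
        have ha : (0:Ω →ₘ[P] ℝ) ≤ |ainv Y| * W := by
          rw [l0_nonneg_iff]
          filter_upwards [AEEqFun.coeFn_mul |ainv Y| W, AEEqFun.coeFn_abs (ainv Y),
            l0_nonneg_iff.1 hW0] with ω h1 h2 h3
          rw [h1]; simp only [Pi.mul_apply]; rw [h2]
          exact mul_nonneg (abs_nonneg _) h3
        have hb : (0:Ω →ₘ[P] ℝ) ≤ e * V0 := by
          rw [l0_nonneg_iff]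
          filter_upwards [AEEqFun.coeFn_mul e V0, coeFn_ind hA,
            l0_nonneg_iff.1 hV0] with ω h1 h2 h3
          rw [h1]; simp only [Pi.mul_apply]; rw [h2]
          refine mul_nonneg ?_ h3
          by_cases hω : ω ∈ A <;> simp [hω]
        have hW'G : W' ∈ gaugeSet P U X := by
          constructor
          · rw [l0_nonneg_iff]
            filter_upwards [AEEqFun.coeFn_add (|ainv Y| * W) (e * V0),
              l0_nonneg_iff.1 ha, l0_nonneg_iff.1 hb] with ω h1 h2 h3
            rw [hW'def, h1]; simp only [Pi.add_apply]
            exact add_nonneg h2 h3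
          · have key : X = (|ainv Y| * W) • (asign (ainv Y) • Zw) + (e * V0) • Z₀ := by
              have e1 : (|ainv Y| * W) • (asign (ainv Y) • Zw)
                  = ((1 - e) : Ω →ₘ[P] ℝ) • X := by
                rw [smul_smul]
                have h : |ainv Y| * W * asign (ainv Y) = asign (ainv Y) * |ainv Y| * W := by
                  ring
                rw [h, asign_mul_abs]
                calc (ainv Y * W) • Zw = ainv Y • (W • Zw) := by rw [mul_smul]
                  _ = ainv Y • (Y • X) := by rw [hXZw]
                  _ = (ainv Y * Y) • X := by rw [mul_smul]
                  _ = ((1 - e) : Ω →ₘ[P] ℝ) • X := by rw [hiy]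
              have e2 : (e * V0) • Z₀ = e • X := by
                rw [mul_smul, hXZ₀]
              rw [e1, e2, ← add_smul]
              simp
            rw [key, hW'def]
            exact smul_add_smul_mem hconv ha hb
              (hbal Zw hZw _ (abs_asign_le_one (ainv Y))) hZ₀
        have hpW' : p X ≤ W' := hplb _ _ hW'G
        -- conclude |Y| * p X ≤ W pointwise
        rw [l0_le_iff]
        filter_upwards [AEEqFun.coeFn_mul |Y| (p X), AEEqFun.coeFn_abs Y, mrep_ae_eq Y,
          l0_le_iff.1 hpW', AEEqFun.coeFn_add (|ainv Y| * W) (e * V0),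
          AEEqFun.coeFn_mul (|ainv Y|) W, AEEqFun.coeFn_mul e V0,
          AEEqFun.coeFn_abs (ainv Y), coeFn_ainv Y, coeFn_ind hA,
          l0_nonneg_iff.1 hW0, l0_nonneg_iff.1 (hp0 X)]
          with ω h1 h2 h3 h4 h5 h6 h7 h8 h9 h10 h11 h12
        rw [h1]; simp only [Pi.mul_apply]; rw [h2]
        by_cases hω : ω ∈ A
        · have hy0 : (Y : Ω →ₘ[P] ℝ) ω = 0 := by rw [h3]; exact hω
          rw [hy0]; simpa using h11
        · have hyne : (Y : Ω →ₘ[P] ℝ) ω ≠ 0 := by rw [h3]; exact hω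
          have hW'val : (W' : Ω →ₘ[P] ℝ) ω = |(Y ω)⁻¹| * W ω := by
            rw [hW'def, h5]; simp only [Pi.add_apply]
            rw [h6, h7]; simp only [Pi.mul_apply]
            rw [h8, h9, h10, Set.indicator_of_notMem hω]
            ring
          have := h4.trans_eq hW'val
          have habs : |(Y:Ω →ₘ[P] ℝ) ω| * ((p X : Ω →ₘ[P] ℝ) ω)
              ≤ |(Y:Ω →ₘ[P] ℝ) ω| * (|(Y ω)⁻¹| * W ω) :=
            mul_le_mul_of_nonneg_left this (abs_nonneg _)
          calc |(Y:Ω →ₘ[P] ℝ) ω| * (p X) ω ≤ |(Y:Ω →ₘ[P] ℝ) ω| * (|(Y ω)⁻¹| * W ω) := habs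
            _ = (|(Y:Ω →ₘ[P] ℝ) ω| * |(Y ω)⁻¹|) * W ω := by ring
            _ = W ω := by rw [← abs_mul, mul_inv_cancel₀ hyne, abs_one, one_mul]
      -- apply to the minimizing sequence of Y • X
      have hn : ∀ n, |Y| * p X ≤ Z (Y • X) n := fun n => hlb _ (hZG (Y • X) n)
      rw [l0_le_iff]
      filter_upwards [ae_all_iff.2 fun n => l0_le_iff.1 (hn n), hZt (Y • X)] with ω h1 h2
      exact ge_of_tendsto h2 (Eventually.of_forall fun n => h1 n)
    exact le_antisymm hle hge
  refine ⟨p, ⟨hp0, hhom, hsub⟩, hplb, ?_⟩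
  -- concatenation property
  intro hcc X hX
  set B : ℕ → Set Ω := fun n => {ω | mrep (Z X n) ω ≤ 3/4} with hBdef
  have hBm : ∀ n, MeasurableSet (B n) := fun n =>
    measurableSet_le (mrep_measurable _) measurable_const
  set B' : ℕ → Set Ω := fun n => if n = 0 then B 0 ∪ (⋃ k, B k)ᶜ else B n with hB'def
  have hB'm : ∀ n, MeasurableSet (B' n) := by
    intro n
    show MeasurableSet (if n = 0 then B 0 ∪ (⋃ k, B k)ᶜ else B n)
    split_ifs
    · exact (hBm 0).union (MeasurableSet.iUnion hBm).compl
    · exact hBm n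
  set A : ℕ → Set Ω := disjointed B' with hAdef
  have hAm : ∀ n, MeasurableSet (A n) := MeasurableSet.disjointed hB'm
  have hAdisj : Pairwise (Function.onFun Disjoint A) := disjoint_disjointed B'
  have hAuniv : (⋃ n, A n) = Set.univ := by
    rw [hAdef, iUnion_disjointed]
    ext ω
    simp only [Set.mem_iUnion, Set.mem_univ, iff_true]
    by_cases hω : ω ∈ ⋃ k, B k
    · obtain ⟨k, hk⟩ := Set.mem_iUnion.1 hω
      cases k with
      | zero => exact ⟨0, by rw [hB'def]; simp only [if_pos rfl]; exact Or.inl hk⟩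
      | succ j => exact ⟨j+1, by rw [hB'def]; simp only [Nat.succ_ne_zero, if_false]; exact hk⟩
    · exact ⟨0, by rw [hB'def]; simp only [if_pos rfl]; exact Or.inr hω⟩
  refine hcc A hAm hAdisj hAuniv X fun n => ?_
  obtain ⟨hZn0, hXin⟩ := hZG X n
  obtain ⟨Vn, hVn, hXV⟩ := Set.mem_smul_set.1 hXin
  have hjunk : ∀ᵐ ω ∂P, ω ∈ ⋃ k, B k := by
    filter_upwards [hZt X, l0_le_iff.1 hX, AEEqFun.coeFn_const (μ := P) Ω (1/2 : ℝ),
      ae_all_iff.2 fun k => mrep_ae_eq (Z X k)] with ω h1 h2 h3 h4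
    have hlim : (p X : Ω →ₘ[P] ℝ) ω < 3/4 := by
      rw [h3] at h2
      calc (p X : Ω →ₘ[P] ℝ) ω ≤ 1/2 := h2
        _ < 3/4 := by norm_num
    have := h1.eventually_lt_const hlim
    obtain ⟨k, hk⟩ := this.exists
    exact Set.mem_iUnion.2 ⟨k, show mrep (Z X k) ω ≤ 3/4 by rw [← h4 k]; exact hk.le⟩
  have hABle : ∀ᵐ ω ∂P, ω ∈ A n → mrep (Z X n) ω ≤ 3/4 := by
    filter_upwards [hjunk] with ω h1 h2
    have hB' : ω ∈ B' n := disjointed_subset B' n h2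
    cases n with
    | zero =>
      rw [hB'def] at hB'
      simp only [if_pos rfl] at hB'
      rcases hB' with h | h
      · exact h
      · exact absurd h1 h
    | succ j =>
      rw [hB'def] at hB'
      simp only [Nat.succ_ne_zero, if_false] at hB'
      exact hB'
  refine ⟨(ind P (A n) (hAm n) * Z X n) • Vn, hbal Vn hVn _ ?_, ?_⟩
  · rw [l0_le_one_iff]
    filter_upwards [AEEqFun.coeFn_abs (ind P (A n) (hAm n) * Z X n),
      AEEqFun.coeFn_mul (ind P (A n) (hAm n)) (Z X n), coeFn_ind (hAm n),
      mrep_ae_eq (Z X n), l0_nonneg_iff.1 hZn0, hABle] with ω h1 h2 h3 h4 h5 h6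
    rw [h1, h2]; simp only [Pi.mul_apply]; rw [h3]
    by_cases hω : ω ∈ A n
    · rw [Set.indicator_of_mem hω, one_mul, abs_of_nonneg h5, h4]
      calc mrep (Z X n) ω ≤ 3/4 := h6 hω
        _ ≤ 1 := by norm_num
    · rw [Set.indicator_of_notMem hω, zero_mul, abs_zero]; exact zero_le_one
  · rw [smul_smul]
    have h : ind P (A n) (hAm n) * (ind P (A n) (hAm n) * Z X n)
        = ind P (A n) (hAm n) * Z X n := by
      rw [← mul_assoc, ind_mul_self]
    rw [h, mul_smul, hXV]

end SeminormPkg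
section BallProps
set_option linter.unusedSectionVars false
set_option maxHeartbeats 1000000

open MeasureTheory Filter

variable {Ω : Type*} [MeasurableSpace Ω] {P : MeasureTheory.Measure Ω} [IsProbabilityMeasure P]
variable {E : Type*} [AddCommGroup E] [Module (Ω →ₘ[P] ℝ) E]

lemma coeFn_finset_sum {ι : Type*} (s : Finset ι) (g : ι → Ω →ₘ[P] ℝ) :
    ⇑(∑ i ∈ s, g i) =ᵐ[P] fun ω => ∑ i ∈ s, (g i : Ω →ₘ[P] ℝ) ω := by
  classical
  induction s using Finset.induction_on with
  | empty => simp only [Finset.sum_empty]; exact AEEqFun.coeFn_zero (β := ℝ) (μ := P)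
  | insert _ _ h ih =>
    rename_i a s'
    filter_upwards [AEEqFun.coeFn_add (g a) (∑ i ∈ s', g i), ih] with ω h1 h2
    rw [Finset.sum_insert h, h1]
    simp only [Pi.add_apply]
    rw [h2, Finset.sum_insert h]

lemma ball_props {Ps : Set (E → (Ω →ₘ[P] ℝ))} (hsemi : ∀ p ∈ Ps, IsL0Seminorm P p)
    (Q : Finset (E → (Ω →ₘ[P] ℝ))) (hQ : (Q : Set (E → (Ω →ₘ[P] ℝ))) ⊆ Ps)
    {ε : Ω →ₘ[P] ℝ} (hε : L0pp P ε) :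
    IsL0Convex P {X : E | ∀ p ∈ Q, p X ≤ ε} ∧
      IsL0Absorbent P {X : E | ∀ p ∈ Q, p X ≤ ε} ∧
      IsL0Balanced P {X : E | ∀ p ∈ Q, p X ≤ ε} ∧
      IsConcatClosed P {X : E | ∀ p ∈ Q, p X ≤ ε} := by
  classical
  refine ⟨?_, ?_, ?_, ?_⟩
  · -- convex
    intro X₁ h₁ X₂ h₂ Y hY0 hY1
    intro q hq
    obtain ⟨hq0, hqhom, hqsub⟩ := hsemi q (hQ hq)
    refine le_trans (hqsub _ _) ?_
    rw [hqhom, hqhom]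
    rw [l0_le_iff]
    filter_upwards [AEEqFun.coeFn_add (|Y| * q X₁) (|1 - Y| * q X₂),
      AEEqFun.coeFn_mul |Y| (q X₁), AEEqFun.coeFn_mul |1 - Y| (q X₂),
      AEEqFun.coeFn_abs Y, AEEqFun.coeFn_abs (1 - Y),
      AEEqFun.coeFn_sub (1 : Ω →ₘ[P] ℝ) Y, AEEqFun.coeFn_one (β := ℝ) (μ := P),
      l0_le_iff.1 (h₁ q hq), l0_le_iff.1 (h₂ q hq),
      l0_nonneg_iff.1 (hq0 X₁), l0_nonneg_iff.1 (hq0 X₂),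
      l0_nonneg_iff.1 hY0, l0_le_one_iff.1 hY1]
      with ω e1 e2 e3 e4 e5 e6 e7 le1 le2 n1 n2 y0 y1
    rw [e1]; simp only [Pi.add_apply]
    rw [e2, e3]; simp only [Pi.mul_apply]
    rw [e4, e5, e6]; simp only [Pi.sub_apply]
    rw [e7]; simp only [Pi.one_apply]
    rw [abs_of_nonneg y0, abs_of_nonneg (by linarith : (0:ℝ) ≤ 1 - (Y:Ω →ₘ[P] ℝ) ω)]
    nlinarith [le1, le2, n1, n2, y0, y1]
  · -- absorbent
    intro X
    set S : Ω →ₘ[P] ℝ := ∑ q ∈ Q, q X with hSdef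
    have hS : ⇑S =ᵐ[P] fun ω => ∑ q ∈ Q, (q X : Ω →ₘ[P] ℝ) ω :=
      coeFn_finset_sum Q (fun q => q X)
    have hqX0 : ∀ᵐ ω ∂P, ∀ q ∈ Q, 0 ≤ (q X : Ω →ₘ[P] ℝ) ω :=
      (ae_ball_iff Q.countable_toSet).2 fun q hq => l0_nonneg_iff.1 ((hsemi q (hQ hq)).1 X)
    set Y : Ω →ₘ[P] ℝ := (1 + S) * ainv ε with hYdef
    have hYc : ∀ᵐ ω ∂P, (Y : Ω →ₘ[P] ℝ) ω = (1 + S ω) * (ε ω)⁻¹ := by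
      filter_upwards [AEEqFun.coeFn_mul (1 + S) (ainv ε), AEEqFun.coeFn_add (1:Ω →ₘ[P] ℝ) S,
        AEEqFun.coeFn_one (β := ℝ) (μ := P), coeFn_ainv ε] with ω h1 h2 h3 h4
      rw [hYdef, h1]; simp only [Pi.mul_apply]
      rw [h2]; simp only [Pi.add_apply]
      rw [h3, h4]; simp
    have hYpos : L0pp P Y := by
      filter_upwards [hYc, hS, hqX0, hε] with ω h1 h2 h3 h4
      rw [h1, h2]
      have hs0 : 0 ≤ ∑ q ∈ Q, (q X : Ω →ₘ[P] ℝ) ω := Finset.sum_nonneg h3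
      positivity
    have hYne : ∀ᵐ ω ∂P, (Y : Ω →ₘ[P] ℝ) ω ≠ 0 := hYpos.mono fun ω h => ne_of_gt h
    refine ⟨Y, hYpos, Set.mem_smul_set.2 ⟨ainv Y • X, ?_, ?_⟩⟩
    · intro q hq
      rw [(hsemi q (hQ hq)).2.1]
      rw [l0_le_iff]
      filter_upwards [AEEqFun.coeFn_mul |ainv Y| (q X), AEEqFun.coeFn_abs (ainv Y),
        coeFn_ainv Y, hYc, hS, hqX0, hε] with ω e1 e2 e3 e4 e5 e6 e7
      rw [e1]; simp only [Pi.mul_apply]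
      rw [e2, e3, e4, e5]
      set s := ∑ q ∈ Q, (q X : Ω →ₘ[P] ℝ) ω with hsdef
      have hs0 : 0 ≤ s := Finset.sum_nonneg e6
      have h1s : (0:ℝ) < 1 + s := by linarith
      have hqs : (q X : Ω →ₘ[P] ℝ) ω ≤ s :=
        Finset.single_le_sum (fun i hi => e6 i hi) hq
      have hinv : ((1 + s) * (ε ω)⁻¹)⁻¹ = ε ω / (1 + s) := by
        rw [mul_inv, inv_inv]
        ring
      rw [hinv, abs_of_pos (by positivity : (0:ℝ) < (ε:Ω →ₘ[P] ℝ) ω / (1 + s))]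
      calc (ε:Ω →ₘ[P] ℝ) ω / (1 + s) * (q X : Ω →ₘ[P] ℝ) ω
          ≤ (ε:Ω →ₘ[P] ℝ) ω / (1 + s) * (1 + s) := by
            refine mul_le_mul_of_nonneg_left (by linarith) (by positivity)
        _ = (ε:Ω →ₘ[P] ℝ) ω := by field_simp
    · rw [smul_smul, mul_ainv hYne, one_smul]
  · -- balanced
    intro X hX Y hY
    intro q hq
    obtain ⟨hq0, hqhom, _⟩ := hsemi q (hQ hq)
    rw [hqhom]
    rw [l0_le_iff]
    filter_upwards [AEEqFun.coeFn_mul |Y| (q X), AEEqFun.coeFn_abs Y,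
      l0_le_one_iff.1 hY, AEEqFun.coeFn_abs Y,
      l0_le_iff.1 (hX q hq), l0_nonneg_iff.1 (hq0 X)] with ω e1 e2 e3 e4 le1 n1
    rw [e1]; simp only [Pi.mul_apply]
    rw [e2]
    rw [e4] at e3
    calc |(Y:Ω →ₘ[P] ℝ) ω| * (q X : Ω →ₘ[P] ℝ) ω
        ≤ 1 * (q X : Ω →ₘ[P] ℝ) ω := mul_le_mul_of_nonneg_right e3 n1
      _ = (q X : Ω →ₘ[P] ℝ) ω := one_mul _
      _ ≤ (ε : Ω →ₘ[P] ℝ) ω := le1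
  · -- concat closed
    intro A hA hdisj huniv X hXn
    intro q hq
    obtain ⟨hq0, hqhom, _⟩ := hsemi q (hQ hq)
    choose Xn hXnmem hXneq using hXn
    have key : ∀ n, |ind P (A n) (hA n)| * q X = |ind P (A n) (hA n)| * q (Xn n) := fun n => by
      rw [← hqhom, ← hqhom, hXneq n]
    rw [l0_le_iff]
    filter_upwards [ae_all_iff.2 fun n => l0_ext_iff.1 (key n),
      ae_all_iff.2 fun n => AEEqFun.coeFn_mul |ind P (A n) (hA n)| (q X),
      ae_all_iff.2 fun n => AEEqFun.coeFn_mul |ind P (A n) (hA n)| (q (Xn n)),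
      ae_all_iff.2 fun n => AEEqFun.coeFn_abs (ind P (A n) (hA n)),
      ae_all_iff.2 fun n => coeFn_ind (P := P) (hA n),
      ae_all_iff.2 fun n => l0_le_iff.1 (hXnmem n q hq)]
      with ω e1 e2 e3 e4 e5 le1
    have hω : ω ∈ ⋃ n, A n := huniv ▸ Set.mem_univ ω
    obtain ⟨n, hn⟩ := Set.mem_iUnion.1 hω
    have h1 := e1 n
    rw [e2 n, e3 n] at h1
    simp only [Pi.mul_apply] at h1
    rw [e4 n, e5 n, Set.indicator_of_mem hn] at h1
    simp only [abs_one, one_mul] at h1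
    rw [h1]
    exact le1 n
end BallProps
/-- characterization of topologies induced by a family of `L⁰`-seminorms. -/
theorem stmt_0 {Ω : Type*} [MeasurableSpace Ω] (P : MeasureTheory.Measure Ω)
    [IsProbabilityMeasure P]
    {E : Type*} [AddCommGroup E] [Module (Ω →ₘ[P] ℝ) E] [TopologicalSpace E]
    (hsmul : ∀ V ∈ nhds (0 : E), ∀ ε : Ω →ₘ[P] ℝ, L0pp P ε →
      ∃ W ∈ nhds (0 : E), ε • W ⊆ V) :
    (∃ Ps : Set (E → (Ω →ₘ[P] ℝ)), (∀ p ∈ Ps, IsL0Seminorm P p) ∧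
      (nhds (0 : E)).HasBasis
        (fun Qε : Finset (E → (Ω →ₘ[P] ℝ)) × (Ω →ₘ[P] ℝ) =>
          (Qε.1 : Set (E → (Ω →ₘ[P] ℝ))) ⊆ Ps ∧ L0pp P Qε.2)
        (fun Qε => {X : E | ∀ p ∈ Qε.1, p X ≤ Qε.2})) ↔
    (∃ Us : Set (Set E), (nhds (0 : E)).HasBasis (· ∈ Us) id ∧
      ∀ U ∈ Us, IsL0Convex P U ∧ IsL0Absorbent P U ∧ IsL0Balanced P U ∧
        IsConcatClosed P U) := by
  classical
  constructor
  · rintro ⟨Ps, hsemi, hbasis⟩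
    refine ⟨{S : Set E | ∃ Q : Finset (E → (Ω →ₘ[P] ℝ)), ∃ ε : Ω →ₘ[P] ℝ,
      ((Q : Set (E → (Ω →ₘ[P] ℝ))) ⊆ Ps ∧ L0pp P ε) ∧
      S = {X : E | ∀ p ∈ Q, p X ≤ ε}}, ?_, ?_⟩
    · rw [Filter.hasBasis_iff]
      intro V
      rw [hbasis.mem_iff]
      constructor
      · rintro ⟨⟨Q, ε⟩, hcond, hsub⟩
        exact ⟨_, ⟨Q, ε, hcond, rfl⟩, hsub⟩
      · rintro ⟨S, ⟨Q, ε, hcond, rfl⟩, hsub⟩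
        exact ⟨(Q, ε), hcond, hsub⟩
    · rintro S ⟨Q, ε, ⟨hQ, hε⟩, rfl⟩
      exact ball_props hsemi Q hQ hε
  · rintro ⟨Us, hbasis, hprop⟩
    have hex : ∀ U : {U : Set E // U ∈ Us}, ∃ p : E → (Ω →ₘ[P] ℝ), IsL0Seminorm P p ∧
        (∀ (X : E) (Y : Ω →ₘ[P] ℝ), Y ∈ gaugeSet P U.1 X → p X ≤ Y) ∧
        (∀ X : E, p X ≤ AEEqFun.const Ω (1/2 : ℝ) → X ∈ U.1) := by
      intro U
      obtain ⟨hc, ha, hb, hcc⟩ := hprop U.1 U.2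
      obtain ⟨p, h1, h2, h3⟩ := exists_gauge_seminorm hc ha hb
      exact ⟨p, h1, h2, h3 hcc⟩
    choose pm hpm hplb hpcc using hex
    have hhalf : L0pp P (AEEqFun.const Ω (1/2 : ℝ) : Ω →ₘ[P] ℝ) := by
      filter_upwards [AEEqFun.coeFn_const (μ := P) Ω (1/2 : ℝ)] with ω h
      rw [h]; norm_num
    refine ⟨Set.range pm, ?_, ?_⟩
    · rintro p ⟨U, rfl⟩
      exact hpm U
    · rw [Filter.hasBasis_iff]
      intro V
      constructor
      · intro hV
        obtain ⟨U, hUs, hUV⟩ := hbasis.mem_iff.1 hV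
        refine ⟨(({pm ⟨U, hUs⟩} : Finset (E → (Ω →ₘ[P] ℝ))), AEEqFun.const Ω (1/2 : ℝ)),
          ⟨?_, hhalf⟩, ?_⟩
        · intro q hq
          simp only [Finset.coe_singleton, Set.mem_singleton_iff] at hq
          exact hq ▸ Set.mem_range_self _
        · intro X hX
          refine hUV (hpcc ⟨U, hUs⟩ X ?_)
          exact hX (pm ⟨U, hUs⟩) (Finset.mem_singleton_self _)
      · rintro ⟨⟨Q, ε⟩, ⟨hQ, hε⟩, hsub⟩
        refine Filter.mem_of_superset ?_ hsub
        have hset : {X : E | ∀ p ∈ Q, p X ≤ ε} = ⋂ p ∈ Q, {X : E | p X ≤ ε} := by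
          ext X; simp
        rw [hset]
        refine (Filter.biInter_finset_mem Q).2 fun q hq => ?_
        obtain ⟨U, hU⟩ := hQ hq
        obtain ⟨W, hW, hWsub⟩ := hsmul U.1 (hbasis.mem_of_mem U.2) (ainv ε) (l0pp_ainv hε)
        refine Filter.mem_of_superset hW fun X hXW => ?_
        have h1 : ainv ε • X ∈ U.1 := hWsub (Set.smul_mem_smul_set hXW)
        have h2 : X ∈ ε • U.1 := by
          refine Set.mem_smul_set.2 ⟨ainv ε • X, h1, ?_⟩
          rw [smul_smul, mul_ainv (hε.mono fun ω h => ne_of_gt h), one_smul]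
        have h3 : (0 : Ω →ₘ[P] ℝ) ≤ ε := l0_nonneg_iff.2 (hε.mono fun ω h => h.le)
        show q X ≤ ε
        rw [← hU]
        exact hplb U X ε ⟨h3, h2⟩
end

section
/- Let E be a module over L⁰, let 𝒫 be a family of L⁰-seminorms on E, let Q ⊆ 𝒫 be finite and ε ∈ L⁰₊₊. Then U_{Q,ε} := {X ∈ E : ‖X‖ ≤ ε a.e. for all ‖·‖ ∈ Q} is closed under countable concatenations: if {A_n} is a countable measurable partition of Ω, X ∈ E, and there are X_n ∈ U_{Q,ε} with 1_{A_n}•X = 1_{A_n}•X_n for all n, then X ∈ U_{Q,ε}. -/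
open MeasureTheory Filter Pointwise

variable {Ω : Type*} [MeasurableSpace Ω] (P : MeasureTheory.Measure Ω ) [IsProbabilityMeasure P]

/-- the seminorm balls `U_{Q,ε}` are closed under countable concatenations. -/
theorem stmt_2 {Ω : Type*} [MeasurableSpace Ω] (P : MeasureTheory.Measure Ω)
    [IsProbabilityMeasure P]
    {E : Type*} [AddCommGroup E] [Module (Ω →ₘ[P] ℝ) E]
    (Ps : Set (E → (Ω →ₘ[P] ℝ))) (hPs : ∀ p ∈ Ps, IsL0Seminorm P p)
    (Q : Finset (E → (Ω →ₘ[P] ℝ))) (hQ : (Q : Set (E → (Ω →ₘ[P] ℝ))) ⊆ Ps)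
    (ε : Ω →ₘ[P] ℝ) (hε : L0pp P ε) :
    IsConcatClosed P {X : E | ∀ p ∈ Q, p X ≤ ε} := by
  intro A hA hdisj hcover X hX
  choose Xn hXn hXeq using hX
  intro p hp
  obtain ⟨hpos, hhom, hadd⟩ := hPs p (hQ hp)
  rw [← AEEqFun.coeFn_le]
  have key : ∀ n, ∀ᵐ ω ∂P, ω ∈ A n → (p X) ω ≤ ε ω := by
    intro n
    have h1 : |ind P (A n) (hA n)| * p X = |ind P (A n) (hA n)| * p (Xn n) := by
      rw [← hhom, ← hhom, hXeq n]
    have h1' : ⇑(|ind P (A n) (hA n)| * p X) =ᵐ[P] ⇑(|ind P (A n) (hA n)| * p (Xn n)) := by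
      rw [h1]
    have hXnle : ⇑(p (Xn n)) ≤ᵐ[P] ⇑ε := AEEqFun.coeFn_le.2 (hXn n p hp)
    have hind : ⇑(ind P (A n) (hA n)) =ᵐ[P] (A n).indicator fun _ => (1:ℝ) :=
      AEEqFun.coeFn_mk _ _
    filter_upwards [h1', hXnle, hind,
      AEEqFun.coeFn_mul (|ind P (A n) (hA n)|) (p X),
      AEEqFun.coeFn_mul (|ind P (A n) (hA n)|) (p (Xn n)),
      AEEqFun.coeFn_abs (ind P (A n) (hA n))]
      with ω he hle hi hm1 hm2 habs hmem
    have hi1 : (ind P (A n) (hA n)) ω = 1 := by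
      rw [hi]; simp [Set.indicator_of_mem hmem]
    have habs1 : (|ind P (A n) (hA n)|) ω = 1 := by rw [habs, hi1]; simp
    calc (p X) ω = (|ind P (A n) (hA n)|) ω * (p X) ω := by rw [habs1, one_mul]
      _ = (|ind P (A n) (hA n)| * p X) ω := (hm1 ▸ rfl)
      _ = (|ind P (A n) (hA n)| * p (Xn n)) ω := he
      _ = (|ind P (A n) (hA n)|) ω * (p (Xn n)) ω := (hm2 ▸ rfl)
      _ = (p (Xn n)) ω := by rw [habs1, one_mul]
      _ ≤ ε ω := hle
  filter_upwards [ae_all_iff.2 key] with ω h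
  have : ω ∈ ⋃ n, A n := hcover ▸ Set.mem_univ ω
  obtain ⟨n, hn⟩ := Set.mem_iUnion.1 this
  exact h n hn
end

section
/- Let E be a module over L⁰ and K ⊆ E an L⁰-convex and L⁰-absorbent set, and let X ∈ E. Then a ∈ L⁰ is a greatest lower bound (a.e. order) of {Y ∈ L⁰₊ : X ∈ Y•K} if and only if a is a greatest lower bound of {Y ∈ L⁰₊₊ : X ∈ Y•K}; i.e., p_K(X) = ess.inf{Y ∈ L⁰₊₊ : X ∈ Y•K}. -/
open MeasureTheory Filter Pointwise

variable {Ω : Type*} [MeasurableSpace Ω] (P : MeasureTheory.Measure Ω ) [IsProbabilityMeasure P]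

theorem stmt5_aux {Ω : Type*} [MeasurableSpace Ω] (P : MeasureTheory.Measure Ω)
    [IsProbabilityMeasure P]
    {E : Type*} [AddCommGroup E] [Module (Ω →ₘ[P] ℝ) E]
    (K : Set E) (hconv : IsL0Convex P K) (X : E)
    {Y : Ω →ₘ[P] ℝ} (hY : Y ∈ gaugeSet P K X)
    {Z : Ω →ₘ[P] ℝ} (hZpos : L0pp P Z) (hZmem : X ∈ Z • K)
    (r : ℝ) (hr0 : 0 < r) (hr1 : r ≤ 1) :
    L0pp P ((1 - AEEqFun.const Ω (μ := P) r) * Y + AEEqFun.const Ω (μ := P) r * Z) ∧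
      X ∈ ((1 - AEEqFun.const Ω (μ := P) r) * Y + AEEqFun.const Ω (μ := P) r * Z) • K := by
  set c : Ω →ₘ[P] ℝ := AEEqFun.const Ω (μ := P) r with hc
  set W : Ω →ₘ[P] ℝ := (1 - c) * Y + c * Z with hWdef
  obtain ⟨hY0, hYmem⟩ := hY
  have hY0' : ∀ᵐ ω ∂P, 0 ≤ Y ω := by
    have := AEEqFun.coeFn_le.2 hY0
    filter_upwards [this, AEEqFun.coeFn_zero (β := ℝ) (μ := P)] with ω h1 h2
    simpa [h2] using h1
  -- pointwise description of W
  have hW : ∀ᵐ ω ∂P, W ω = (1 - r) * Y ω + r * Z ω := by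
    filter_upwards [AEEqFun.coeFn_add ((1 - c) * Y) (c * Z), AEEqFun.coeFn_mul (1 - c) Y,
      AEEqFun.coeFn_mul c Z, AEEqFun.coeFn_sub (1 : Ω →ₘ[P] ℝ) c,
      AEEqFun.coeFn_one (β := ℝ) (μ := P), AEEqFun.coeFn_const (α := Ω) (μ := P) r]
      with ω h1 h2 h3 h4 h5 h6
    simp only [Pi.add_apply, Pi.mul_apply, Pi.sub_apply, Pi.one_apply, Function.const_apply]
      at *
    rw [h1, h2, h3, h4, h5, h6]
  have hWpos : ∀ᵐ ω ∂P, 0 < W ω := by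
    filter_upwards [hW, hY0', hZpos] with ω h1 h2 h3
    rw [h1]
    have : 0 ≤ (1 - r) * Y ω := mul_nonneg (by linarith) h2
    nlinarith
  refine ⟨hWpos, ?_⟩
  -- the inverse of W
  set Winv : Ω →ₘ[P] ℝ :=
    AEEqFun.mk (fun ω => (W ω)⁻¹)
      (W.aestronglyMeasurable.aemeasurable.inv.aestronglyMeasurable) with hWinvdef
  have hWinvcoe : ∀ᵐ ω ∂P, Winv ω = (W ω)⁻¹ := AEEqFun.coeFn_mk _ _
  have hWWinv : W * Winv = 1 := by
    apply AEEqFun.ext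
    filter_upwards [AEEqFun.coeFn_mul W Winv, hWinvcoe, hWpos,
      AEEqFun.coeFn_one (β := ℝ) (μ := P)] with ω h1 h2 h3 h4
    simp only [Pi.mul_apply, Pi.one_apply] at *
    rw [h1, h2, h4, mul_inv_cancel₀ h3.ne']
  set μ : Ω →ₘ[P] ℝ := Winv * ((1 - c) * Y) with hμdef
  have hμcoe : ∀ᵐ ω ∂P, μ ω = (W ω)⁻¹ * ((1 - r) * Y ω) := by
    filter_upwards [AEEqFun.coeFn_mul Winv ((1 - c) * Y), hWinvcoe,
      AEEqFun.coeFn_mul (1 - c) Y, AEEqFun.coeFn_sub (1 : Ω →ₘ[P] ℝ) c,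
      AEEqFun.coeFn_one (β := ℝ) (μ := P), AEEqFun.coeFn_const (α := Ω) (μ := P) r]
      with ω h1 h2 h3 h4 h5 h6
    simp only [Pi.mul_apply, Pi.sub_apply, Pi.one_apply, Function.const_apply] at *
    rw [h1, h2, h3, h4, h5, h6]
  have hμ0 : 0 ≤ μ := by
    rw [← AEEqFun.coeFn_le]
    filter_upwards [hμcoe, hWpos, hY0', AEEqFun.coeFn_zero (β := ℝ) (μ := P)]
      with ω h1 h2 h3 h4
    simp only [Pi.zero_apply] at *
    rw [h1, h4]
    exact mul_nonneg (inv_nonneg.2 h2.le) (mul_nonneg (by linarith) h3)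
  have hμ1 : μ ≤ 1 := by
    rw [← AEEqFun.coeFn_le]
    filter_upwards [hμcoe, hW, hWpos, hY0', hZpos,
      AEEqFun.coeFn_one (β := ℝ) (μ := P)] with ω h1 h2 h3 h4 h5 h6
    simp only [Pi.one_apply] at *
    rw [h1, h6]
    have hle : (1 - r) * Y ω ≤ W ω := by rw [h2]; nlinarith
    calc (W ω)⁻¹ * ((1 - r) * Y ω) ≤ (W ω)⁻¹ * W ω :=
          mul_le_mul_of_nonneg_left hle (inv_nonneg.2 h3.le)
      _ = 1 := inv_mul_cancel₀ h3.ne'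
  have hWμ : W * μ = (1 - c) * Y := by
    rw [hμdef, ← mul_assoc, hWWinv, one_mul]
  have hWμ' : W * (1 - μ) = c * Z := by
    rw [mul_sub, mul_one, hWμ, hWdef]; ring
  obtain ⟨k₁, hk₁, hk₁eq⟩ := hYmem
  obtain ⟨k₂, hk₂, hk₂eq⟩ := hZmem
  change Y • k₁ = X at hk₁eq
  change Z • k₂ = X at hk₂eq
  refine ⟨μ • k₁ + (1 - μ) • k₂, hconv k₁ hk₁ k₂ hk₂ μ hμ0 hμ1, ?_⟩
  calc W • (μ • k₁ + (1 - μ) • k₂)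
      = (W * μ) • k₁ + (W * (1 - μ)) • k₂ := by rw [smul_add, smul_smul, smul_smul]
    _ = ((1 - c) * Y) • k₁ + (c * Z) • k₂ := by rw [hWμ, hWμ']
    _ = (1 - c) • (Y • k₁) + c • (Z • k₂) := by rw [mul_smul, mul_smul]
    _ = (1 - c) • X + c • X := by rw [hk₁eq, hk₂eq]
    _ = X := by rw [← add_smul, sub_add_cancel, one_smul]

/-- `p_K(X) = ess.inf {Y ∈ L⁰₊₊ : X ∈ Y•K}` for an `L⁰`-convex,
`L⁰`-absorbent `K`. -/
theorem stmt_5 {Ω : Type*} [MeasurableSpace Ω] (P : MeasureTheory.Measure Ω)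
    [IsProbabilityMeasure P]
    {E : Type*} [AddCommGroup E] [Module (Ω →ₘ[P] ℝ) E]
    (K : Set E) (hconv : IsL0Convex P K) (habs : IsL0Absorbent P K)
    (X : E) (a : Ω →ₘ[P] ℝ) :
    IsGLB (gaugeSet P K X) a ↔
      IsGLB {Y : Ω →ₘ[P] ℝ | L0pp P Y ∧ X ∈ Y • K} a := by
  set S := gaugeSet P K X with hS
  set T := {Y : Ω →ₘ[P] ℝ | L0pp P Y ∧ X ∈ Y • K} with hT
  have hTS : T ⊆ S := by
    rintro Y ⟨hYpos, hYmem⟩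
    refine ⟨?_, hYmem⟩
    rw [← AEEqFun.coeFn_le]
    filter_upwards [hYpos, AEEqFun.coeFn_zero (β := ℝ) (μ := P)] with ω h1 h2
    simp only [Pi.zero_apply] at *
    rw [h2]; exact h1.le
  obtain ⟨Z, hZpos, hZmem⟩ := habs X
  have hlb : lowerBounds S = lowerBounds T := by
    apply Set.Subset.antisymm
    · exact fun b hb Y hY => hb (hTS hY)
    · intro b hb Y hY
      -- b ≤ each convex combination
      have key : ∀ n : ℕ, b ≤ (1 - AEEqFun.const Ω (μ := P) ((n + 1 : ℝ)⁻¹)) * Y +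
          AEEqFun.const Ω (μ := P) ((n + 1 : ℝ)⁻¹) * Z := by
        intro n
        have hr0 : (0 : ℝ) < (n + 1 : ℝ)⁻¹ := by positivity
        have hr1 : ((n + 1 : ℝ))⁻¹ ≤ 1 := by
          rw [inv_le_one_iff₀]; right; exact le_add_of_nonneg_left (Nat.cast_nonneg n)
        exact hb (stmt5_aux P K hconv X hY hZpos hZmem _ hr0 hr1)
      have key' : ∀ n : ℕ, ∀ᵐ ω ∂P,
          b ω ≤ (1 - (n + 1 : ℝ)⁻¹) * Y ω + (n + 1 : ℝ)⁻¹ * Z ω := by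
        intro n
        have := AEEqFun.coeFn_le.2 (key n)
        set c : Ω →ₘ[P] ℝ := AEEqFun.const Ω (μ := P) ((n + 1 : ℝ)⁻¹)
        filter_upwards [this, AEEqFun.coeFn_add ((1 - c) * Y) (c * Z),
          AEEqFun.coeFn_mul (1 - c) Y, AEEqFun.coeFn_mul c Z,
          AEEqFun.coeFn_sub (1 : Ω →ₘ[P] ℝ) c, AEEqFun.coeFn_one (β := ℝ) (μ := P),
          AEEqFun.coeFn_const (α := Ω) (μ := P) ((n + 1 : ℝ)⁻¹)]
          with ω h1 h2 h3 h4 h5 h6 h7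
        simp only [Pi.add_apply, Pi.mul_apply, Pi.sub_apply, Pi.one_apply,
          Function.const_apply] at *
        rw [h2, h3, h4, h5, h6, h7] at h1
        exact h1
      rw [← AEEqFun.coeFn_le]
      have hall : ∀ᵐ ω ∂P, ∀ n : ℕ,
          b ω ≤ (1 - (n + 1 : ℝ)⁻¹) * Y ω + (n + 1 : ℝ)⁻¹ * Z ω :=
        ae_all_iff.2 key'
      filter_upwards [hall] with ω hω
      have htend : Filter.Tendsto
          (fun n : ℕ => (1 - (n + 1 : ℝ)⁻¹) * Y ω + (n + 1 : ℝ)⁻¹ * Z ω)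
          Filter.atTop (nhds (Y ω)) := by
        have h0 : Filter.Tendsto (fun n : ℕ => ((n : ℝ) + 1)⁻¹) Filter.atTop (nhds 0) := by
          simpa using tendsto_one_div_add_atTop_nhds_zero_nat (𝕜 := ℝ)
        have h1 : Filter.Tendsto (fun n : ℕ => (1 - ((n : ℝ) + 1)⁻¹) * Y ω)
            Filter.atTop (nhds ((1 - 0) * Y ω)) :=
          (tendsto_const_nhds.sub h0).mul tendsto_const_nhds
        have h2 : Filter.Tendsto (fun n : ℕ => ((n : ℝ) + 1)⁻¹ * Z ω)
            Filter.atTop (nhds (0 * Z ω)) := h0.mul tendsto_const_nhds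
        have := h1.add h2
        simpa using this
      exact ge_of_tendsto' htend hω
  constructor
  · rintro ⟨ha1, ha2⟩
    exact ⟨fun Y hY => ha1 (hTS hY), by rw [← hlb]; exact ha2⟩
  · rintro ⟨ha1, ha2⟩
    refine ⟨?_, by rw [hlb]; exact ha2⟩
    have : a ∈ lowerBounds T := ha1
    rw [← hlb] at this
    exact this
end

section
/- Let E be a module over L⁰ and K ⊆ E an L⁰-convex and L⁰-absorbent set, and let X ∈ E. If a ∈ L⁰ is a greatest lower bound (a.e. order) of {Y ∈ L⁰₊ : X ∈ Y•K}, then for every Z ∈ L⁰₊ the element Z·a is a greatest lower bound of {Y ∈ L⁰₊ : Z•X ∈ Y•K}; i.e., Z·p_K(X) = p_K(Z•X) for all Z ∈ L⁰₊. -/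
open MeasureTheory Filter Pointwise

variable {Ω : Type*} [MeasurableSpace Ω] (P : MeasureTheory.Measure Ω ) [IsProbabilityMeasure P]

section Helpers

variable {α : Type*} [MeasurableSpace α] {μ : MeasureTheory.Measure α}

lemma ae_le_of {f g : α →ₘ[μ] ℝ} (h : ∀ᵐ ω ∂μ, f ω ≤ g ω) : f ≤ g :=
  AEEqFun.coeFn_le.mp h

lemma of_ae_le {f g : α →ₘ[μ] ℝ} (h : f ≤ g) : ∀ᵐ ω ∂μ, f ω ≤ g ω :=
  AEEqFun.coeFn_le.mpr h

lemma mul_eq_of_ae {f g h : α →ₘ[μ] ℝ} (H : ∀ᵐ ω ∂μ, f ω * g ω = h ω) : f * g = h :=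
  AEEqFun.ext (by
    filter_upwards [AEEqFun.coeFn_mul f g, H] with ω h1 h2
    rw [h1]; exact h2)

lemma coeFn_mul' (f g : α →ₘ[μ] ℝ) : ∀ᵐ ω ∂μ, (f * g) ω = f ω * g ω :=
  AEEqFun.coeFn_mul f g

lemma ae_nonneg {f : α →ₘ[μ] ℝ} (h : 0 ≤ f) : ∀ᵐ ω ∂μ, 0 ≤ f ω := by
  filter_upwards [of_ae_le h, AEEqFun.coeFn_zero (β := ℝ) (μ := μ)] with ω h1 h2
  rw [h2] at h1; exact h1

lemma nonneg_of_ae {f : α →ₘ[μ] ℝ} (h : ∀ᵐ ω ∂μ, 0 ≤ f ω) : 0 ≤ f :=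
  ae_le_of (by filter_upwards [h, AEEqFun.coeFn_zero (β := ℝ) (μ := μ)] with ω h1 h2; rw [h2]; exact h1)

lemma mul_le_mul_ae {Z c a : α →ₘ[μ] ℝ} (hZ : 0 ≤ Z) (h : c ≤ a) : Z * c ≤ Z * a := by
  apply ae_le_of
  filter_upwards [coeFn_mul' Z c, coeFn_mul' Z a, ae_nonneg hZ, of_ae_le h] with ω h1 h2 h3 h4
  rw [h1, h2]
  exact mul_le_mul_of_nonneg_left h4 h3

end Helpers

/-- `Z · p_K(X) = p_K(Z • X)` for `Z ∈ L⁰₊` and an `L⁰`-convex,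
`L⁰`-absorbent `K`. -/
theorem stmt_6 {Ω : Type*} [MeasurableSpace Ω] (P : MeasureTheory.Measure Ω)
    [IsProbabilityMeasure P]
    {E : Type*} [AddCommGroup E] [Module (Ω →ₘ[P] ℝ) E]
    (K : Set E) (hconv : IsL0Convex P K) (habs : IsL0Absorbent P K)
    (X : E) (a : Ω →ₘ[P] ℝ) (ha : IsGLB (gaugeSet P K X) a) :
    ∀ Z : Ω →ₘ[P] ℝ, 0 ≤ Z → IsGLB (gaugeSet P K (Z • X)) (Z * a) := by
  intro Z hZ
  have hZmeas : Measurable (⇑Z) := Z.measurable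
  set A : Set Ω := {ω | 0 < Z ω} with hAdef
  have hA : MeasurableSet A := measurableSet_lt measurable_const hZmeas
  set ef : Ω → ℝ := A.indicator fun _ => 1 with hefdef
  set e : Ω →ₘ[P] ℝ := AEEqFun.mk ef (aestronglyMeasurable_const.indicator hA) with hedef
  have he : ⇑e =ᵐ[P] ef := AEEqFun.coeFn_mk _ _
  set uf : Ω → ℝ := fun ω => if 0 < Z ω then (Z ω)⁻¹ else 0 with hufdef
  have hufm : Measurable uf :=
    Measurable.ite (measurableSet_lt measurable_const hZmeas) hZmeas.inv measurable_const
  set u : Ω →ₘ[P] ℝ := AEEqFun.mk uf hufm.aestronglyMeasurable with hudef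
  have hu : ⇑u =ᵐ[P] uf := AEEqFun.coeFn_mk _ _
  have hZ0 : ∀ᵐ ω ∂P, 0 ≤ Z ω := ae_nonneg hZ
  have hef : ∀ ω, ef ω = if 0 < Z ω then 1 else 0 := fun ω => by
    simp [hefdef, Set.indicator_apply, hAdef, Set.mem_setOf_eq]
  have huf : ∀ ω, uf ω = if 0 < Z ω then (Z ω)⁻¹ else 0 := fun ω => rfl
  -- absorbency at X
  obtain ⟨V, hVpos, hVX⟩ := habs X
  rw [Set.mem_smul_set] at hVX
  obtain ⟨k₂, hk₂K, hk₂⟩ := hVX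
  have hVpos' : ∀ᵐ ω ∂P, 0 < V ω := hVpos
  -- key ring identities
  have huZ : u * Z = e := mul_eq_of_ae (by
    filter_upwards [hu, he, hZ0] with ω h1 h2 h3
    rw [h1, h2, hef ω, huf ω]
    by_cases h : 0 < Z ω
    · simp [h, inv_mul_cancel₀ (ne_of_gt h)]
    · simp [h])
  have hsum : e + (1 - e) = 1 := by ring
  have he0 : 0 ≤ e := nonneg_of_ae (by
    filter_upwards [he] with ω h1
    rw [h1, hef ω]; split <;> norm_num)
  have he1 : e ≤ 1 := ae_le_of (by
    filter_upwards [he, AEEqFun.coeFn_one (β := ℝ) (μ := P)] with ω h1 h2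
    rw [h1, h2, hef ω]; split <;> norm_num)
  constructor
  · -- Z * a is a lower bound of gaugeSet P K (Z • X)
    rintro Y ⟨hY0, hYK⟩
    rw [Set.mem_smul_set] at hYK
    obtain ⟨k, hkK, hk⟩ := hYK
    set W : Ω →ₘ[P] ℝ := u * Y + (1 - e) * V with hWdef
    have hWcoe : ∀ᵐ ω ∂P, W ω = uf ω * Y ω + (1 - ef ω) * V ω := by
      filter_upwards [AEEqFun.coeFn_add (u * Y) ((1 - e) * V), coeFn_mul' u Y,
        coeFn_mul' (1 - e) V, AEEqFun.coeFn_sub (1 : Ω →ₘ[P] ℝ) e,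
        AEEqFun.coeFn_one (β := ℝ) (μ := P), hu, he] with ω h1 h2 h3 h4 h5 h6 h7
      rw [hWdef, h1]
      simp only [Pi.add_apply]
      rw [h2, h3, h4]
      simp only [Pi.sub_apply]
      rw [h5, h6, h7]
      simp only [Pi.one_apply]
    have hY0' : ∀ᵐ ω ∂P, 0 ≤ Y ω := ae_nonneg hY0
    have hW0 : 0 ≤ W := nonneg_of_ae (by
      filter_upwards [hWcoe, hY0', hVpos'] with ω h1 h2 h3
      rw [h1, hef ω, huf ω]
      by_cases h : 0 < Z ω
      · simp only [if_pos h]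
        have : 0 ≤ (Z ω)⁻¹ := le_of_lt (inv_pos.mpr h)
        nlinarith
      · simp only [if_neg h]
        nlinarith)
    have hmK : e • k + (1 - e) • k₂ ∈ K := hconv k hkK k₂ hk₂K e he0 he1
    have s1 : (u * Y) * e = u * Y := mul_eq_of_ae (by
      filter_upwards [coeFn_mul' u Y, hu, he] with ω h1 h2 h3
      rw [h1, h2, h3, hef ω, huf ω]
      by_cases h : 0 < Z ω <;> simp [h])
    have s2 : (u * Y) * (1 - e) = 0 := mul_eq_of_ae (by
      filter_upwards [coeFn_mul' u Y, hu, he, AEEqFun.coeFn_sub (1 : Ω →ₘ[P] ℝ) e,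
        AEEqFun.coeFn_one (β := ℝ) (μ := P), AEEqFun.coeFn_zero (β := ℝ) (μ := P)]
        with ω h1 h2 h3 h4 h5 h6
      rw [h1, h4]
      simp only [Pi.sub_apply]
      rw [h2, h3, h5, h6, hef ω, huf ω]
      by_cases h : 0 < Z ω <;> simp [h])
    have s3 : ((1 - e) * V) * e = 0 := mul_eq_of_ae (by
      filter_upwards [coeFn_mul' (1 - e) V, he, AEEqFun.coeFn_sub (1 : Ω →ₘ[P] ℝ) e,
        AEEqFun.coeFn_one (β := ℝ) (μ := P), AEEqFun.coeFn_zero (β := ℝ) (μ := P)]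
        with ω h1 h2 h3 h4 h5
      rw [h1, h3]
      simp only [Pi.sub_apply]
      rw [h2, h4, h5, hef ω]
      by_cases h : 0 < Z ω <;> simp [h])
    have s4 : ((1 - e) * V) * (1 - e) = (1 - e) * V := mul_eq_of_ae (by
      filter_upwards [coeFn_mul' (1 - e) V, he, AEEqFun.coeFn_sub (1 : Ω →ₘ[P] ℝ) e,
        AEEqFun.coeFn_one (β := ℝ) (μ := P)] with ω h1 h2 h3 h4
      rw [h1, h3]
      simp only [Pi.sub_apply]
      rw [h2, h4, hef ω]
      by_cases h : 0 < Z ω <;> simp [h])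
    have hWm : W • (e • k + (1 - e) • k₂) = X := by
      calc W • (e • k + (1 - e) • k₂)
          = ((u * Y) • (e • k) + ((1 - e) * V) • (e • k)) +
              ((u * Y) • ((1 - e) • k₂) + ((1 - e) * V) • ((1 - e) • k₂)) := by
            rw [hWdef, smul_add, add_smul, add_smul]
        _ = (((u * Y) * e) • k + ((((1 - e) * V) * e)) • k) +
              ((((u * Y) * (1 - e))) • k₂ + ((((1 - e) * V) * (1 - e))) • k₂) := by
            rw [smul_smul, smul_smul, smul_smul, smul_smul]
        _ = (u * Y) • k + ((1 - e) * V) • k₂ := by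
            rw [s1, s2, s3, s4, zero_smul, zero_smul, add_zero, zero_add]
        _ = u • (Y • k) + (1 - e) • (V • k₂) := by rw [mul_smul, mul_smul]
        _ = (u * Z) • X + (1 - e) • X := by rw [hk, hk₂, ← mul_smul]
        _ = (e + (1 - e)) • X := by rw [huZ, add_smul]
        _ = X := by rw [hsum, one_smul]
    have h1 : a ≤ W := ha.1 ⟨hW0, Set.mem_smul_set.mpr ⟨_, hmK, hWm⟩⟩
    refine (mul_le_mul_ae hZ h1).trans (ae_le_of ?_)
    filter_upwards [coeFn_mul' Z W, hWcoe, hZ0, hY0'] with ω p1 p2 p3 p4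
    rw [p1, p2, hef ω, huf ω]
    by_cases h : 0 < Z ω
    · simp only [if_pos h]
      rw [sub_self, zero_mul, add_zero, ← mul_assoc, mul_inv_cancel₀ (ne_of_gt h), one_mul]
    · have hz : Z ω = 0 := le_antisymm (not_lt.mp h) p3
      rw [hz, zero_mul]
      exact p4
  · -- greatest among lower bounds
    rintro b hb
    have hbZV : b ≤ Z * V := hb ⟨nonneg_of_ae (by
        filter_upwards [coeFn_mul' Z V, hZ0, hVpos'] with ω h1 h2 h3
        rw [h1]; positivity),
      Set.mem_smul_set.mpr ⟨k₂, hk₂K, by rw [mul_smul, hk₂]⟩⟩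
    set c : Ω →ₘ[P] ℝ := u * b + (1 - e) * a with hcdef
    have hccoe : ∀ᵐ ω ∂P, c ω = uf ω * b ω + (1 - ef ω) * a ω := by
      filter_upwards [AEEqFun.coeFn_add (u * b) ((1 - e) * a), coeFn_mul' u b,
        coeFn_mul' (1 - e) a, AEEqFun.coeFn_sub (1 : Ω →ₘ[P] ℝ) e,
        AEEqFun.coeFn_one (β := ℝ) (μ := P), hu, he] with ω h1 h2 h3 h4 h5 h6 h7
      rw [hcdef, h1]
      simp only [Pi.add_apply]
      rw [h2, h3, h4]
      simp only [Pi.sub_apply]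
      rw [h5, h6, h7]
      simp only [Pi.one_apply]
    have hclb : c ∈ lowerBounds (gaugeSet P K X) := by
      rintro Y ⟨hY0, hYK⟩
      rw [Set.mem_smul_set] at hYK
      obtain ⟨k', hk'K, hk'⟩ := hYK
      have hbZY : b ≤ Z * Y := hb ⟨nonneg_of_ae (by
          filter_upwards [coeFn_mul' Z Y, hZ0, ae_nonneg hY0] with ω h1 h2 h3
          rw [h1]; positivity),
        Set.mem_smul_set.mpr ⟨k', hk'K, by rw [mul_smul, hk']⟩⟩
      have haY : a ≤ Y := ha.1 ⟨hY0, Set.mem_smul_set.mpr ⟨k', hk'K, hk'⟩⟩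
      apply ae_le_of
      filter_upwards [hccoe, of_ae_le hbZY, coeFn_mul' Z Y, of_ae_le haY, hZ0]
        with ω h1 h2 h3 h4 h5
      rw [h3] at h2
      rw [h1, hef ω, huf ω]
      by_cases h : 0 < Z ω
      · simp only [if_pos h, sub_self, zero_mul, add_zero]
        rw [inv_mul_le_iff₀ h]
        exact h2
      · simp only [if_neg h, zero_mul, zero_add, sub_zero, one_mul]
        exact h4
    have hca : c ≤ a := ha.2 hclb
    have hZc : Z * c ≤ Z * a := mul_le_mul_ae hZ hca
    apply ae_le_of
    filter_upwards [of_ae_le hZc, coeFn_mul' Z c, coeFn_mul' Z a, hccoe,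
      of_ae_le hbZV, coeFn_mul' Z V, hZ0] with ω q1 q2 q3 q4 q5 q6 q7
    rw [q2, q4] at q1
    rw [q6] at q5
    by_cases h : 0 < Z ω
    · have : Z ω * (uf ω * b ω + (1 - ef ω) * a ω) = b ω := by
        rw [hef ω, huf ω]
        simp only [if_pos h, sub_self, zero_mul, add_zero, ← mul_assoc,
          mul_inv_cancel₀ (ne_of_gt h), one_mul]
      rw [this] at q1
      exact q1
    · have hz : Z ω = 0 := le_antisymm (not_lt.mp h) q7
      rw [q3, hz, zero_mul]
      rw [hz, zero_mul] at q5
      exact q5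
end

section
/- Let E be a module over L⁰ and K ⊆ E an L⁰-convex and L⁰-absorbent set, and let X, X' ∈ E. If a, b, c ∈ L⁰ are greatest lower bounds (a.e. order) of {Y ∈ L⁰₊ : X ∈ Y•K}, {Y ∈ L⁰₊ : X' ∈ Y•K} and {Y ∈ L⁰₊ : X+X' ∈ Y•K} respectively, then c ≤ a + b a.e.; i.e., p_K(X+X') ≤ p_K(X) + p_K(X'). -/
open MeasureTheory Filter Pointwise

variable {Ω : Type*} [MeasurableSpace Ω] (P : MeasureTheory.Measure Ω ) [IsProbabilityMeasure P]

section AuxGauge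

variable {Ω' : Type*} [MeasurableSpace Ω'] {P' : MeasureTheory.Measure Ω'}

private lemma aux_sub_le_of_le_add {f g h : Ω' →ₘ[P'] ℝ} (hfg : f ≤ g + h) :
    f - h ≤ g := by
  rw [← AEEqFun.coeFn_le] at hfg ⊢
  filter_upwards [hfg, AEEqFun.coeFn_add g h, AEEqFun.coeFn_sub f h] with ω h1 h2 h3
  rw [h2] at h1
  rw [h3]
  simpa [sub_le_iff_le_add] using h1

private lemma aux_le_add_of_sub_le {f g h : Ω' →ₘ[P'] ℝ} (hfg : f - h ≤ g) :
    f ≤ g + h := by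
  rw [← AEEqFun.coeFn_le] at hfg ⊢
  filter_upwards [hfg, AEEqFun.coeFn_add g h, AEEqFun.coeFn_sub f h] with ω h1 h2 h3
  rw [h3] at h1
  rw [h2]
  simpa [sub_le_iff_le_add] using h1

end AuxGauge

/-- subadditivity of the gauge, `p_K(X+X') ≤ p_K(X) + p_K(X')`. -/
theorem stmt_7 {Ω : Type*} [MeasurableSpace Ω] (P : MeasureTheory.Measure Ω)
    [IsProbabilityMeasure P]
    {E : Type*} [AddCommGroup E] [Module (Ω →ₘ[P] ℝ) E]
    (K : Set E) (hconv : IsL0Convex P K) (habs : IsL0Absorbent P K)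
    (X X' : E) (a b c : Ω →ₘ[P] ℝ)
    (ha : IsGLB (gaugeSet P K X) a) (hb : IsGLB (gaugeSet P K X') b)
    (hc : IsGLB (gaugeSet P K (X + X')) c) :
    c ≤ a + b := by
  have key : ∀ Y ∈ gaugeSet P K X, ∀ Z ∈ gaugeSet P K X', Y + Z ∈ gaugeSet P K (X + X') := by
    rintro Y ⟨hY0, k₁, hk₁, rfl⟩ Z ⟨hZ0, k₂, hk₂, rfl⟩
    set W := Y + Z with hWdef
    have hY0' : ∀ᵐ ω ∂P, 0 ≤ Y ω := by
      have h := AEEqFun.coeFn_le.2 hY0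
      filter_upwards [h, AEEqFun.coeFn_zero (β := ℝ) (μ := P)] with ω h1 h2
      rw [h2] at h1; exact h1
    have hZ0' : ∀ᵐ ω ∂P, 0 ≤ Z ω := by
      have h := AEEqFun.coeFn_le.2 hZ0
      filter_upwards [h, AEEqFun.coeFn_zero (β := ℝ) (μ := P)] with ω h1 h2
      rw [h2] at h1; exact h1
    have hWc : ∀ᵐ ω ∂P, W ω = Y ω + Z ω := AEEqFun.coeFn_add Y Z
    have hWmeas : MeasureTheory.AEStronglyMeasurable (fun ω => Y ω * (W ω)⁻¹) P :=
      (Y.aemeasurable.mul W.aemeasurable.inv).aestronglyMeasurable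
    set lam : Ω →ₘ[P] ℝ := MeasureTheory.AEEqFun.mk (fun ω => Y ω * (W ω)⁻¹) hWmeas with hlamdef
    have hlamc : ∀ᵐ ω ∂P, lam ω = Y ω * (W ω)⁻¹ := AEEqFun.coeFn_mk _ _
    have hlam0 : (0 : Ω →ₘ[P] ℝ) ≤ lam := by
      rw [← AEEqFun.coeFn_le]
      filter_upwards [hlamc, hWc, hY0', hZ0', AEEqFun.coeFn_zero (β := ℝ) (μ := P)]
        with ω h1 h2 h3 h4 h5
      rw [h5, h1]
      have hw : 0 ≤ W ω := by rw [h2]; positivity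
      positivity
    have hlam1 : lam ≤ 1 := by
      rw [← AEEqFun.coeFn_le]
      filter_upwards [hlamc, hWc, hY0', hZ0', AEEqFun.coeFn_one (β := ℝ) (μ := P)]
        with ω h1 h2 h3 h4 h5
      rw [h1, h5]
      simp only [Pi.one_apply]
      rcases eq_or_lt_of_le (show (0:ℝ) ≤ W ω by rw [h2]; positivity) with h | h
      · simp [← h]
      · rw [← div_eq_mul_inv, div_le_one h, h2]; linarith
    have hmul1 : W * lam = Y := by
      apply AEEqFun.ext
      filter_upwards [AEEqFun.coeFn_mul W lam, hlamc, hWc, hY0', hZ0'] with ω h1 h2 h3 h4 h5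
      rw [h1]
      simp only [Pi.mul_apply]
      rw [h2]
      rcases eq_or_ne (W ω) 0 with h | h
      · have hy : Y ω = 0 := by rw [h3] at h; linarith
        simp [h, hy]
      · field_simp
    have hmul2 : W * (1 - lam) = Z := by
      apply AEEqFun.ext
      filter_upwards [AEEqFun.coeFn_mul W (1 - lam), AEEqFun.coeFn_sub (1 : Ω →ₘ[P] ℝ) lam,
        AEEqFun.coeFn_one (β := ℝ) (μ := P), hlamc, hWc, hY0', hZ0']
        with ω h1 h2 h3 h4 h5 h6 h7
      rw [h1]
      simp only [Pi.mul_apply, Pi.sub_apply, Pi.one_apply] at *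
      rw [h2, h3, h4]
      rcases eq_or_ne (W ω) 0 with h | h
      · have hz : Z ω = 0 := by rw [h5] at h; linarith
        simp [h, hz]
      · field_simp
        rw [h5]; ring
    have hW0 : (0 : Ω →ₘ[P] ℝ) ≤ W := by
      rw [← AEEqFun.coeFn_le]
      filter_upwards [hWc, hY0', hZ0', AEEqFun.coeFn_zero (β := ℝ) (μ := P)] with ω h1 h2 h3 h4
      rw [h4, h1]; positivity
    refine ⟨hW0, lam • k₁ + (1 - lam) • k₂, hconv k₁ hk₁ k₂ hk₂ lam hlam0 hlam1, ?_⟩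
    show W • (lam • k₁ + (1 - lam) • k₂) = Y • k₁ + Z • k₂
    rw [smul_add, smul_smul, smul_smul, hmul1, hmul2]
  have h1 : ∀ Z ∈ gaugeSet P K X', c - Z ≤ a := fun Z hZ =>
    ha.2 fun Y hY => aux_sub_le_of_le_add (hc.1 (key Y hY Z hZ))
  have h2 : c - a ≤ b := hb.2 fun Z hZ => by
    have h := aux_le_add_of_sub_le (h1 Z hZ)
    rw [add_comm] at h
    exact aux_sub_le_of_le_add h
  have h3 := aux_le_add_of_sub_le h2
  rwa [add_comm] at h3
end

section
/- For every ε ∈ L⁰₊₊, the set U_ε := {Y ∈ L⁰ : ∃ finite I ⊆ ℕ such that |Y·1_{A_i}| ≤ ε a.e. for all i ∉ I} is not closed under countable concatenations: the element ε+1 satisfies (ε+1)·1_{A_n} ∈ U_ε for every n (and hence 1_{A_n}·(ε+1) = 1_{A_n}·X_n with X_n := (ε+1)·1_{A_n} ∈ U_ε), yet ε+1 ∉ U_ε. -/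
open MeasureTheory Filter Pointwise

variable {Ω : Type*} [MeasurableSpace Ω] (P : MeasureTheory.Measure Ω ) [IsProbabilityMeasure P]

/-- The set `U_ε` of the counterexample: `Y ∈ U_ε` iff `|Y·1_{A_i}| ≤ ε` a.e. for all `i`
outside some finite set `I ⊆ ℕ`. -/
def Uset (A : ℕ → Set Ω) (hA : ∀ n, MeasurableSet (A n)) (ε : Ω →ₘ[P] ℝ) :
    Set (Ω →ₘ[P] ℝ) :=
  {Y : Ω →ₘ[P] ℝ | ∃ I : Finset ℕ, ∀ i ∉ I, |Y * ind P (A i) (hA i)| ≤ ε}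

/-- `U_ε` is not closed under countable concatenations: each
`(ε+1)·1_{A_n}` belongs to `U_ε` (and `1_{A_n}·(ε+1) = 1_{A_n}·((ε+1)·1_{A_n})`),
yet `ε+1 ∉ U_ε`. -/
theorem stmt_12 {Ω : Type*} [MeasurableSpace Ω] (P : MeasureTheory.Measure Ω)
    [IsProbabilityMeasure P]
    (A : ℕ → Set Ω) (hA : ∀ n, MeasurableSet (A n))
    (hdisj : Pairwise (Function.onFun Disjoint A)) (hcover : (⋃ n, A n) = Set.univ)
    (hpos : ∀ n, 0 < P (A n))
    (ε : Ω →ₘ[P] ℝ) (hε : L0pp P ε) :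
    (∀ n, (ε + 1) * ind P (A n) (hA n) ∈ Uset P A hA ε) ∧
    (∀ n, ind P (A n) (hA n) * (ε + 1) =
      ind P (A n) (hA n) * ((ε + 1) * ind P (A n) (hA n))) ∧
    (ε + 1) ∉ Uset P A hA ε ∧
    ¬ IsConcatClosed P (Uset P A hA ε) := by

  classical
  have ind_coe : ∀ n, ⇑(ind P (A n) (hA n)) =ᵐ[P] (A n).indicator (fun _ => (1:ℝ)) :=
    fun n => AEEqFun.coeFn_mk _ _
  -- Part 1
  have h1 : ∀ n, (ε + 1) * ind P (A n) (hA n) ∈ Uset P A hA ε := by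
    intro n
    refine ⟨{n}, fun i hi => ?_⟩
    rw [← AEEqFun.coeFn_le]
    filter_upwards [AEEqFun.coeFn_abs ((ε + 1) * ind P (A n) (hA n) * ind P (A i) (hA i)),
      AEEqFun.coeFn_mul ((ε + 1) * ind P (A n) (hA n)) (ind P (A i) (hA i)),
      AEEqFun.coeFn_mul (ε + 1) (ind P (A n) (hA n)), ind_coe n, ind_coe i, hε]
      with ω habs hm1 hm2 hn hi' hεω
    simp only [Pi.mul_apply, Pi.add_apply, Pi.one_apply] at *
    rw [habs, hm1, hm2, hn, hi']
    have hni : i ≠ n := by simpa using hi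
    have hd : Disjoint (A n) (A i) := hdisj (fun h => hni h.symm)
    by_cases hωn : ω ∈ A n
    · have : ω ∉ A i := fun h => hd.ne_of_mem hωn h rfl
      simp only [Pi.mul_apply, Set.indicator_of_notMem this]
      simp only [mul_zero, abs_zero]
      linarith
    · simp only [Pi.mul_apply, Set.indicator_of_notMem hωn]
      simp only [mul_zero, zero_mul, abs_zero]
      linarith
  -- Part 2
  have h2 : ∀ n, ind P (A n) (hA n) * (ε + 1) =
      ind P (A n) (hA n) * ((ε + 1) * ind P (A n) (hA n)) := by
    intro n
    apply AEEqFun.ext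
    filter_upwards [AEEqFun.coeFn_mul (ind P (A n) (hA n)) (ε + 1),
      AEEqFun.coeFn_mul (ind P (A n) (hA n)) ((ε + 1) * ind P (A n) (hA n)),
      AEEqFun.coeFn_mul (ε + 1) (ind P (A n) (hA n)), ind_coe n]
      with ω hm1 hm2 hm3 hn
    simp only [Pi.mul_apply] at *
    rw [hm1, hm2, hm3, hn]
    by_cases hω : ω ∈ A n
    · simp [Set.indicator_of_mem hω]
    · simp [Set.indicator_of_notMem hω]
  -- Part 3
  have h3 : (ε + 1) ∉ Uset P A hA ε := by
    rintro ⟨I, hI⟩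
    obtain ⟨i, hi⟩ := Infinite.exists_notMem_finset I
    have hle := hI i hi
    rw [← AEEqFun.coeFn_le] at hle
    have hae : ∀ᵐ ω ∂P, ω ∉ A i := by
      filter_upwards [hle, AEEqFun.coeFn_abs ((ε + 1) * ind P (A i) (hA i)),
        AEEqFun.coeFn_mul (ε + 1) (ind P (A i) (hA i)),
        AEEqFun.coeFn_add ε 1, ind_coe i, hε,
        AEEqFun.coeFn_one (β := ℝ) (μ := P)]
        with ω hle' habs hm hadd hi' hεω hone hmem
      rw [habs, hm] at hle'
      simp only [Pi.mul_apply] at hle'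
      rw [hadd, hi', Set.indicator_of_mem hmem] at hle'
      simp only [Pi.add_apply] at hle'
      rw [hone] at hle'
      simp only [Pi.one_apply, mul_one] at hle'
      rw [abs_of_pos (by linarith)] at hle'
      linarith
    have hz : P (A i) = 0 := measure_eq_zero_iff_ae_notMem.mpr hae
    exact absurd hz (hpos i).ne'
  refine ⟨h1, h2, h3, fun hcc => ?_⟩
  exact h3 (hcc A hA hdisj hcover (ε + 1)
    (fun n => ⟨(ε + 1) * ind P (A n) (hA n), h1 n, by
      rw [smul_eq_mul, smul_eq_mul]; exact h2 n⟩))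
end
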